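/- arXiv:1104.4896 — 6 statements merged into one kernel-verified Lean document; each statement's English description precedes it below -/
import Mathlib

section
/- Let X be a topological space, A ⊆ X, and α an ordinal such that CD^α(A) ⊋ CD^{α+1}(A) ⊋ CD^{α+2}(A) (both inclusions strict). Then the set difference CD^α(A) \ CD^{α+1}(A) is uncountable (has cardinality at least ℵ₁). -/
/-- The condensation derivative: the set of condensation points of `A`,
i.e. points every neighborhood of which meets `A` in an uncountable set. -/
def CD (X : Type*) [TopologicalSpace X] (A : Set X) : Set X :=
  {p | ∀ U ∈ nhds p, ¬(U ∩ A).Countable}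

/-- Transfinite iterates of the condensation derivative. -/
noncomputable def CDiter (X : Type*) [TopologicalSpace X] (A : Set X) : Ordinal → Set X :=
  fun o => Ordinal.limitRecOn o A (fun _ ih => CD X ih)
    (fun o _ ih => ⋂ (b : Set.Iio o), ih b.1 b.2)

lemma cditer_succ {X : Type*} [TopologicalSpace X] (A : Set X) (o : Ordinal) :
    CDiter X A (o + 1) = CD X (CDiter X A o) := by
  rw [CDiter, Ordinal.add_one_eq_succ, Ordinal.limitRecOn_succ]; rfl

theorem cditer_diff_uncountable {X : Type*} [TopologicalSpace X] {A : Set X}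
    {α : Ordinal} (h1 : CDiter X A (α + 1) ⊂ CDiter X A α)
    (h2 : CDiter X A (α + 2) ⊂ CDiter X A (α + 1)) :
    ¬(CDiter X A α \ CDiter X A (α + 1)).Countable := by
  obtain ⟨p, hp1, hp2⟩ := Set.exists_of_ssubset h2
  have hα2 : CDiter X A (α + 2) = CD X (CDiter X A (α + 1)) := by
    have : α + 2 = (α + 1) + 1 := by rw [← one_add_one_eq_two, ← add_assoc]
    rw [this, cditer_succ]
  rw [hα2] at hp2
  rw [cditer_succ] at hp1
  -- hp2 : p ∉ CD X (CDiter X A (α+1))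
  simp only [CD, Set.mem_setOf_eq, not_forall] at hp2
  obtain ⟨U, hU, hUc⟩ := hp2
  have hUc : (U ∩ CDiter X A (α + 1)).Countable := not_not.mp hUc
  intro hd
  have : ¬(U ∩ CDiter X A α).Countable := hp1 U hU
  apply this
  have hsub : U ∩ CDiter X A α ⊆ (U ∩ CDiter X A (α + 1)) ∪
      (CDiter X A α \ CDiter X A (α + 1)) := by
    intro x ⟨hxU, hxA⟩
    by_cases h : x ∈ CDiter X A (α + 1)
    · exact Or.inl ⟨hxU, h⟩
    · exact Or.inr ⟨hxA, h⟩
  exact (hUc.union hd).mono hsub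
end

section
/- Let X be a metric locally compact space. Then for every A ⊆ X, CD(CD(A)) = CD(A); i.e., the condensation derivative on a locally compact metric space is idempotent. -/
lemma cd_mono {X : Type*} [TopologicalSpace X] {A B : Set X} (h : B ⊆ A) :
    CD X B ⊆ CD X A := by
  intro p hp U hU hc
  exact hp U hU (hc.mono (Set.inter_subset_inter_right U h))

lemma cd_subset_closure {X : Type*} [TopologicalSpace X] (A : Set X) :
    CD X A ⊆ closure A := by
  intro p hp
  rw [mem_closure_iff_nhds]
  intro U hU
  by_contra h
  rw [Set.not_nonempty_iff_eq_empty] at h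
  exact hp U hU (h ▸ Set.countable_empty)

lemma isClosed_cd {X : Type*} [TopologicalSpace X] (A : Set X) :
    IsClosed (CD X A) := by
  rw [← closure_subset_iff_isClosed]
  intro p hp U hU
  obtain ⟨V, hVU, hVopen, hpV⟩ := mem_nhds_iff.mp hU
  obtain ⟨q, hqV, hq⟩ := mem_closure_iff.mp hp V hVopen hpV
  intro hc
  exact hq V (hVopen.mem_nhds hqV) (hc.mono (Set.inter_subset_inter_left A hVU))

/-- In a metric space, a separable set minus its condensation points is countable. -/
lemma countable_diff_cd {X : Type*} [MetricSpace X] {B : Set X}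
    (hB : TopologicalSpace.IsSeparable B) : (B \ CD X B).Countable := by
  obtain ⟨D, hDc, hDd⟩ := hB
  set S : Set (X × ℚ) := {dq | dq.1 ∈ D ∧ (Metric.ball dq.1 (dq.2 : ℝ) ∩ B).Countable}
  have hSc : S.Countable := by
    have : S ⊆ D ×ˢ (Set.univ : Set ℚ) := fun dq hdq => ⟨hdq.1, trivial⟩
    exact (hDc.prod (Set.countable_univ)).mono this
  have hsub : B \ CD X B ⊆ ⋃ dq ∈ S, Metric.ball dq.1 (dq.2 : ℝ) ∩ B := by
    rintro b ⟨hbB, hb⟩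
    simp only [CD, Set.mem_setOf_eq, not_forall] at hb
    obtain ⟨U, hU, hUc⟩ := hb
    rw [not_not] at hUc
    obtain ⟨ε, hε, hball⟩ := Metric.mem_nhds_iff.mp hU
    obtain ⟨d, hdD, hd⟩ := Metric.mem_closure_iff.mp (hDd hbB) (ε / 3) (by linarith)
    obtain ⟨q, hq1, hq2⟩ := exists_rat_btwn (show ε / 3 < 2 * ε / 3 by linarith)
    have hmem : b ∈ Metric.ball d (q : ℝ) := by
      rw [Metric.mem_ball]
      exact lt_trans hd hq1
    have hsub2 : Metric.ball d (q : ℝ) ⊆ Metric.ball b ε := by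
      intro x hx
      rw [Metric.mem_ball] at hx ⊢
      calc dist x b ≤ dist x d + dist d b := dist_triangle x d b
        _ < (q : ℝ) + ε / 3 := by
            rw [dist_comm d b]; exact add_lt_add hx hd
        _ < 2 * ε / 3 + ε / 3 := by linarith
        _ = ε := by ring
    have hcnt : (Metric.ball d (q : ℝ) ∩ B).Countable :=
      hUc.mono (Set.inter_subset_inter_left B (hsub2.trans hball))
    exact Set.mem_biUnion (show (d, q) ∈ S from ⟨hdD, hcnt⟩) ⟨hmem, hbB⟩
  exact (hSc.biUnion (fun dq hdq => hdq.2)).mono hsub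

theorem cd_idem_locallyCompact {X : Type*} [MetricSpace X]
    [LocallyCompactSpace X] (A : Set X) : CD X (CD X A) = CD X A := by
  apply Set.Subset.antisymm
  · exact (cd_subset_closure (CD X A)).trans (isClosed_cd A).closure_subset
  · intro p hp U hU
    obtain ⟨K, hKc, hK⟩ := exists_compact_mem_nhds p
    set B := (U ∩ K) ∩ A with hBdef
    have hBunc : ¬ B.Countable := hp (U ∩ K) (Filter.inter_mem hU hK)
    have hsep : TopologicalSpace.IsSeparable B :=
      hKc.isSeparable.mono (fun x hx => hx.1.2)
    have hdiff := countable_diff_cd hsep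
    have hint : ¬ (B ∩ CD X B).Countable := by
      intro hc
      apply hBunc
      have : B ⊆ (B \ CD X B) ∪ (B ∩ CD X B) := by
        intro x hx
        by_cases h : x ∈ CD X B
        · exact Or.inr ⟨hx, h⟩
        · exact Or.inl ⟨hx, h⟩
      exact (hdiff.union hc).mono this
    intro hc
    apply hint
    apply hc.mono
    rintro x ⟨hxB, hxCD⟩
    exact ⟨hxB.1.1, cd_mono (fun y hy => hy.2) hxCD⟩
end

section
/- There exists an uncountable closed subset A of ℓ∞ (the Banach space of bounded real sequences with the sup norm) such that CD(A) is a singleton and CD(CD(A)) = ∅; in particular A is totally imperfect (contains no nonempty perfect subset) and has condensation rank exactly 2. -/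
open Metric Set
open scoped Classical
set_option synthInstance.maxHeartbeats 1000000
set_option maxHeartbeats 1000000

lemma aux_bound (m : ℕ) (S : Set ℕ) (i : ℕ) :
    ‖if i ∈ S then (1:ℝ)/((m:ℝ)+1) else 0‖ ≤ 1/((m:ℝ)+1) := by
  split
  · rw [Real.norm_eq_abs, abs_of_nonneg (by positivity)]
  · rw [norm_zero]; positivity

noncomputable def fS (m : ℕ) (S : Set ℕ) : lp (fun _ : ℕ => ℝ) ⊤ :=
  ⟨fun i => if i ∈ S then (1:ℝ)/((m:ℝ)+1) else 0, memℓp_infty ⟨1/((m:ℝ)+1), by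
    rintro x ⟨i, rfl⟩; exact aux_bound m S i⟩⟩

lemma fS_apply (m : ℕ) (S : Set ℕ) (i : ℕ) :
    (fS m S : ∀ _ : ℕ, ℝ) i = if i ∈ S then (1:ℝ)/((m:ℝ)+1) else 0 := rfl

lemma fS_empty (m : ℕ) : fS m (∅ : Set ℕ) = 0 := by
  ext i; simp [fS_apply]

lemma norm_fS_le (m : ℕ) (S : Set ℕ) : ‖fS m S‖ ≤ 1/((m:ℝ)+1) := by
  apply lp.norm_le_of_forall_le (by positivity)
  intro i
  rw [fS_apply]
  exact aux_bound m S i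

lemma coord_dist (x y : lp (fun _ : ℕ => ℝ) ⊤) (i : ℕ) :
    |(x : ∀ _ : ℕ, ℝ) i - (y : ∀ _ : ℕ, ℝ) i| ≤ dist x y := by
  have h := lp.norm_apply_le_norm (by simp : (⊤ : ENNReal) ≠ 0) (x - y) i
  have h2 : ((x - y : lp (fun _ : ℕ => ℝ) ⊤) : ∀ _ : ℕ, ℝ) i
      = (x : ∀ _ : ℕ, ℝ) i - (y : ∀ _ : ℕ, ℝ) i := by
    rw [lp.coeFn_sub]; rfl
  rw [dist_eq_norm]
  rw [h2, Real.norm_eq_abs] at h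
  exact h

lemma norm_fS (m : ℕ) {S : Set ℕ} (hS : S.Nonempty) : ‖fS m S‖ = 1/((m:ℝ)+1) := by
  refine le_antisymm (norm_fS_le m S) ?_
  obtain ⟨i, hi⟩ := hS
  have h := lp.norm_apply_le_norm (by simp : (⊤ : ENNReal) ≠ 0) (fS m S) i
  rw [fS_apply] at h
  simp only [hi, if_true] at h
  rw [Real.norm_eq_abs, abs_of_nonneg (by positivity)] at h
  exact h

lemma fS_inj (m : ℕ) : Function.Injective (fS m) := by
  intro S S' h
  ext i
  have := congrArg (fun f : lp (fun _ : ℕ => ℝ) ⊤ => (f : ∀ _ : ℕ, ℝ) i) h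
  simp only [fS_apply] at this
  have hpos : (0:ℝ) < 1/((m:ℝ)+1) := by positivity
  by_cases h1 : i ∈ S <;> by_cases h2 : i ∈ S' <;>
    simp [h1, h2] at this ⊢ <;> linarith

lemma fS_eq_zero_iff (m : ℕ) (S : Set ℕ) : fS m S = 0 ↔ S = ∅ := by
  constructor
  · intro h
    by_contra hne
    obtain ⟨i, hi⟩ := Set.nonempty_iff_ne_empty.2 hne
    have hpos : (0:ℝ) < 1/((m:ℝ)+1) := by positivity
    have h0 := congrArg (fun f : lp (fun _ : ℕ => ℝ) ⊤ => (f : ∀ _ : ℕ, ℝ) i) h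
    simp only [fS_apply, hi, if_true] at h0
    norm_num at h0
    linarith
  · rintro rfl; exact fS_empty m

lemma gap {m m' : ℕ} (h : m ≠ m') :
    1/(((m:ℝ)+1)*((m:ℝ)+2)) ≤ |1/((m:ℝ)+1) - 1/((m':ℝ)+1)| := by
  rcases lt_or_gt_of_ne h with hlt | hlt
  · -- m < m', so 1/(m+1) - 1/(m'+1) > 0, and 1/(m'+1) ≤ 1/(m+2)
    have hc : ((m:ℝ)) + 2 ≤ (m':ℝ) + 1 := by
      have : (m:ℝ) + 1 ≤ (m':ℝ) := by exact_mod_cast Nat.succ_le_of_lt hlt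
      linarith
    have h1 : 1/((m':ℝ)+1) ≤ 1/((m:ℝ)+2) := by
      apply one_div_le_one_div_of_le (by positivity) hc
    have h2 : 1/((m:ℝ)+1) - 1/((m:ℝ)+2) = 1/(((m:ℝ)+1)*((m:ℝ)+2)) := by
      field_simp
      ring
    have h3 : 1/((m:ℝ)+2) < 1/((m:ℝ)+1) := by
      apply one_div_lt_one_div_of_lt (by positivity) (by linarith)
    rw [abs_of_pos (by linarith)]
    linarith
  · -- m' < m, so m ≥ 1, m'+1 ≤ m
    have hm1 : (1:ℝ) ≤ (m:ℝ) := by exact_mod_cast Nat.one_le_iff_ne_zero.2 (Nat.pos_of_ne_zero (by omega)).ne'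
    have hc : ((m':ℝ)) + 1 ≤ (m:ℝ) := by exact_mod_cast Nat.succ_le_of_lt hlt
    have h1 : 1/((m:ℝ)) ≤ 1/((m':ℝ)+1) := by
      apply one_div_le_one_div_of_le (by positivity) hc
    have h2 : 1/((m:ℝ)) - 1/((m:ℝ)+1) = 1/(((m:ℝ))*((m:ℝ)+1)) := by
      field_simp
      ring
    have h4 : 1/(((m:ℝ)+1)*((m:ℝ)+2)) ≤ 1/(((m:ℝ))*((m:ℝ)+1)) := by
      apply one_div_le_one_div_of_le (by positivity)
      nlinarith
    rw [abs_sub_comm, abs_of_pos]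
    · linarith
    · have : 1/((m:ℝ)+1) < 1/((m':ℝ)+1) := by
        apply one_div_lt_one_div_of_lt (by positivity) (by linarith)
      linarith

/-- The set A. -/
def Aset : Set (lp (fun _ : ℕ => ℝ) ⊤) := {x | ∃ m S, x = fS m S}

lemma zero_mem_Aset : (0 : lp (fun _ : ℕ => ℝ) ⊤) ∈ Aset := ⟨0, ∅, (fS_empty 0).symm⟩

lemma mem_Aset_nonzero {x : lp (fun _ : ℕ => ℝ) ⊤} (hx : x ∈ Aset) (hx0 : x ≠ 0) :
    ∃ m S, S.Nonempty ∧ x = fS m S := by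
  obtain ⟨m, S, rfl⟩ := hx
  refine ⟨m, S, ?_, rfl⟩
  rw [Set.nonempty_iff_ne_empty]
  intro h; exact hx0 ((fS_eq_zero_iff m S).2 h)

/-- same level, different sets: distance at least 1/(m+1) -/
lemma dist_same_level {m : ℕ} {S S' : Set ℕ} (h : S ≠ S') :
    1/((m:ℝ)+1) ≤ dist (fS m S) (fS m S') := by
  have : ∃ i, (i ∈ S ∧ i ∉ S') ∨ (i ∈ S' ∧ i ∉ S) := by
    by_contra hc
    push_neg at hc
    apply h
    ext i
    have := hc i
    tauto
  obtain ⟨i, hi⟩ := this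
  have hd := coord_dist (fS m S) (fS m S') i
  rcases hi with ⟨h1, h2⟩ | ⟨h1, h2⟩
  · simp only [fS_apply, h1, h2, if_true, if_false] at hd
    rw [sub_zero, abs_of_nonneg (by positivity)] at hd; exact hd
  · simp only [fS_apply, h1, h2, if_true, if_false] at hd
    rw [abs_sub_comm, sub_zero, abs_of_nonneg (by positivity)] at hd; exact hd

/-- Separation: a nonzero point of A is 1/((m+1)(m+2))-separated from every other point of A. -/
lemma separation {m : ℕ} {S : Set ℕ} (hS : S.Nonempty) {y : lp (fun _ : ℕ => ℝ) ⊤}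
    (hy : y ∈ Aset) (hne : y ≠ fS m S) :
    1/(((m:ℝ)+1)*((m:ℝ)+2)) ≤ dist (fS m S) y := by
  obtain ⟨m', S', rfl⟩ := hy
  have key : 1/(((m:ℝ)+1)*((m:ℝ)+2)) ≤ 1/((m:ℝ)+1) := by
    apply one_div_le_one_div_of_le (by positivity)
    nlinarith [Nat.cast_nonneg (α := ℝ) m]
  rcases Set.eq_empty_or_nonempty S' with rfl | hS'
  · -- y = 0, dist = ‖fS m S‖ = 1/(m+1)
    rw [fS_empty, dist_zero_right, norm_fS m hS]
    exact key
  rcases eq_or_ne m m' with rfl | hmm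
  · -- same level
    have hSS : S ≠ S' := fun h => hne (by rw [h])
    calc 1/(((m:ℝ)+1)*((m:ℝ)+2)) ≤ 1/((m:ℝ)+1) := key
      _ ≤ dist (fS m S) (fS m S') := dist_same_level hSS
  · -- different levels
    rcases Set.eq_empty_or_nonempty (S ∩ S') with hint | ⟨i, hiS, hiS'⟩
    · -- disjoint: coordinate in S gives 1/(m+1)
      obtain ⟨i, hiS⟩ := hS
      have hiS' : i ∉ S' := fun h => (Set.eq_empty_iff_forall_notMem.1 hint i) ⟨hiS, h⟩
      have hd := coord_dist (fS m S) (fS m' S') i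
      simp only [fS_apply, hiS, hiS', if_true, if_false] at hd
      rw [show (1:ℝ)/((m:ℝ)+1) - 0 = 1/((m:ℝ)+1) by ring,
        abs_of_nonneg (by positivity)] at hd
      linarith
    · -- common coordinate: values differ by the gap
      have hd := coord_dist (fS m S) (fS m' S') i
      simp only [fS_apply, hiS, hiS', if_true] at hd
      exact le_trans (gap hmm) hd

/-- uniqueness of level for nonzero elements -/
lemma level_eq {m m' : ℕ} {S S' : Set ℕ} (hS : S.Nonempty) (hS' : S'.Nonempty)
    (h : fS m S = fS m' S') : m = m' := by
  have h1 := norm_fS m hS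
  rw [h, norm_fS m' hS'] at h1
  field_simp at h1
  exact_mod_cast add_right_cancel h1

lemma isolated {m : ℕ} {S : Set ℕ} (hS : S.Nonempty) :
    Metric.ball (fS m S) (1/(2*((m:ℝ)+1)*((m:ℝ)+2))) ∩ Aset ⊆ {fS m S} := by
  rintro y ⟨hball, hA⟩
  by_contra hne
  have hsep := separation hS hA (by simpa using hne)
  rw [Metric.mem_ball, dist_comm] at hball
  have : 1/(2*((m:ℝ)+1)*((m:ℝ)+2)) < 1/(((m:ℝ)+1)*((m:ℝ)+2)) := by
    apply one_div_lt_one_div_of_lt (by positivity)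
    nlinarith [Nat.cast_nonneg (α := ℝ) m]
  linarith

lemma Aset_closed : IsClosed Aset := by
  rw [← closure_subset_iff_isClosed]
  intro x hx
  rcases eq_or_ne x 0 with rfl | hx0
  · exact zero_mem_Aset
  have hr : 0 < ‖x‖ := norm_pos_iff.2 hx0
  set r := ‖x‖ with hrdef
  set δ := r/4 with hδdef
  have hδpos : 0 < δ := by positivity
  set F := Metric.ball x δ ∩ Aset with hF
  have hFnorm : ∀ y ∈ F, r - δ < ‖y‖ := by
    rintro y ⟨hb, _⟩
    have h1 := norm_sub_norm_le x y
    rw [← dist_eq_norm] at h1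
    rw [Metric.mem_ball, dist_comm] at hb
    linarith
  classical
  set lvl : lp (fun _ : ℕ => ℝ) ⊤ → ℕ :=
    fun y => if h : ∃ m S, S.Nonempty ∧ y = fS m S then h.choose else 0 with hlvl
  have hspec0 : ∀ y, (h : ∃ m S, S.Nonempty ∧ y = fS m S) →
      ∃ S, S.Nonempty ∧ y = fS (lvl y) S := by
    intro y h
    rw [hlvl]
    simp only [dif_pos h]
    exact h.choose_spec
  have hspec : ∀ y ∈ F, ∃ S, S.Nonempty ∧ y = fS (lvl y) S := by
    rintro y hy
    have hy0 : y ≠ 0 := by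
      have := hFnorm y hy
      intro h; rw [h, norm_zero] at this; linarith
    obtain ⟨m, S, hSne, hyeq⟩ := mem_Aset_nonzero hy.2 hy0
    exact hspec0 y ⟨m, S, hSne, hyeq⟩
  have hnormF : ∀ y ∈ F, ‖y‖ = 1/((lvl y : ℝ)+1) := by
    intro y hy
    obtain ⟨S, hSne, hyeq⟩ := hspec y hy
    conv_lhs => rw [hyeq]
    rw [norm_fS _ hSne]
  have hhalf : ∀ y ∈ F, r/2 < 1/((lvl y : ℝ)+1) := by
    intro y hy
    have h1 := hFnorm y hy
    rw [hnormF y hy] at h1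
    rw [hδdef] at h1
    linarith
  -- F is finite
  have hFfin : F.Finite := by
    apply Set.Finite.of_finite_image (f := lvl)
    · apply Set.Finite.subset (Set.finite_Iio (⌈(2:ℝ)/r⌉₊ + 1))
      rintro n ⟨y, hy, rfl⟩
      have h1 := hhalf y hy
      have hpos : (0:ℝ) < (lvl y : ℝ) + 1 := by positivity
      have h2 : r * ((lvl y : ℝ)+1) < 1 * 2 :=
        (div_lt_div_iff₀ (by norm_num) hpos).1 h1
      have h3 : ((lvl y : ℝ)+1) < 2/r := (lt_div_iff₀ hr).2 (by linarith)
      have h4 : (lvl y : ℝ) < (⌈(2:ℝ)/r⌉₊ : ℝ) + 1 := by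
        have := Nat.le_ceil ((2:ℝ)/r)
        linarith
      rw [Set.mem_Iio]
      exact_mod_cast h4
    · rintro y hy y' hy' hl
      obtain ⟨S, hSne, hyeq⟩ := hspec y hy
      obtain ⟨S', hSne', hyeq'⟩ := hspec y' hy'
      rw [hl] at hyeq
      have hhalf' := hhalf y' hy'
      rcases eq_or_ne S S' with rfl | hSS
      · exact hyeq.trans hyeq'.symm
      · exfalso
        have hd : dist y y' < 2*δ := by
          calc dist y y' ≤ dist y x + dist x y' := dist_triangle y x y'
            _ < δ + δ := add_lt_add hy.1 (by rw [dist_comm]; exact hy'.1)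
            _ = 2*δ := by ring
        have hsep : 1/((lvl y':ℝ)+1) ≤ dist y y' := by
          have hds := dist_same_level (m := lvl y') hSS
          rwa [← hyeq, ← hyeq'] at hds
        rw [hδdef] at hd
        linarith
  -- x is in the closure of F
  have hxF : x ∈ closure F := by
    rw [Metric.mem_closure_iff]
    intro ε hε
    obtain ⟨b, hbA, hbd⟩ := Metric.mem_closure_iff.1 hx (min ε δ) (lt_min hε hδpos)
    refine ⟨b, ⟨?_, hbA⟩, lt_of_lt_of_le hbd (min_le_left _ _)⟩
    rw [Metric.mem_ball, dist_comm]
    exact lt_of_lt_of_le hbd (min_le_right _ _)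
  rw [hFfin.isClosed.closure_eq] at hxF
  exact hxF.2

lemma not_countable_range_fS (m : ℕ) : ¬ (Set.range (fS m)).Countable := by
  intro hc
  have h1 : Countable (Set ℕ) := by
    have := (Set.countable_coe_iff.2 hc)
    exact Countable.of_equiv _ (Equiv.ofInjective (fS m) (fS_inj m)).symm
  obtain ⟨g, hg⟩ := countable_iff_exists_injective (Set ℕ) |>.1 h1
  exact Function.cantor_injective g hg

lemma not_countable_Aset : ¬ Aset.Countable := by
  intro h
  exact not_countable_range_fS 0
    (h.mono (by rintro y ⟨S, rfl⟩; exact ⟨0, S, rfl⟩))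

lemma CD_countable {X : Type*} [TopologicalSpace X] {B : Set X} (h : B.Countable) :
    CD X B = ∅ := by
  rw [Set.eq_empty_iff_forall_notMem]
  intro p hp
  exact hp Set.univ Filter.univ_mem (by rwa [Set.univ_inter])

lemma CD_Aset : CD _ Aset = {(0 : lp (fun _ : ℕ => ℝ) ⊤)} := by
  apply Set.eq_singleton_iff_unique_mem.2
  constructor
  · -- 0 is a condensation point
    intro U hU
    obtain ⟨ε, hε, hball⟩ := Metric.mem_nhds_iff.1 hU
    obtain ⟨m, hm⟩ := exists_nat_one_div_lt hε
    intro hc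
    apply not_countable_range_fS m
    apply hc.mono
    rintro y ⟨S, rfl⟩
    refine ⟨hball ?_, m, S, rfl⟩
    rw [Metric.mem_ball, dist_zero_right]
    calc ‖fS m S‖ ≤ 1/((m:ℝ)+1) := norm_fS_le m S
      _ < ε := by exact_mod_cast hm
  · -- uniqueness
    intro p hp
    by_contra hp0
    by_cases hpA : p ∈ Aset
    · obtain ⟨m, S, hSne, rfl⟩ := mem_Aset_nonzero hpA hp0
      apply hp (Metric.ball (fS m S) (1/(2*((m:ℝ)+1)*((m:ℝ)+2))))
        (Metric.ball_mem_nhds _ (by positivity))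
      exact (Set.countable_singleton (fS m S)).mono (isolated hSne)
    · apply hp Asetᶜ (Aset_closed.isOpen_compl.mem_nhds hpA)
      rw [Set.compl_inter_self]
      exact Set.countable_empty

lemma perfect_sub_empty : ∀ P ⊆ Aset, Perfect P → P = ∅ := by
  intro P hPA hP
  rw [Set.eq_empty_iff_forall_notMem]
  intro p hp
  have hP0 : ∀ q ∈ P, q = 0 := by
    intro q hq
    by_contra hq0
    obtain ⟨m, S, hSne, rfl⟩ := mem_Aset_nonzero (hPA hq) hq0
    have hacc := hP.acc _ hq
    rw [accPt_iff_nhds] at hacc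
    obtain ⟨y, ⟨hyb, hyP⟩, hyne⟩ := hacc (Metric.ball _ (1/(2*((m:ℝ)+1)*((m:ℝ)+2))))
      (Metric.ball_mem_nhds _ (by positivity))
    exact hyne (by have := isolated hSne ⟨hyb, hPA hyP⟩; simpa using this)
  have hacc := hP.acc p hp
  rw [accPt_iff_nhds] at hacc
  obtain ⟨y, ⟨_, hyP⟩, hyne⟩ := hacc Set.univ Filter.univ_mem
  exact hyne ((hP0 y hyP).trans (hP0 p hp).symm)

lemma CDiter_zero (X : Type*) [TopologicalSpace X] (A : Set X) : CDiter X A 0 = A := by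
  simp [CDiter, Ordinal.limitRecOn_zero]

lemma CDiter_succ (X : Type*) [TopologicalSpace X] (A : Set X) (o : Ordinal) :
    CDiter X A (Order.succ o) = CD X (CDiter X A o) := by
  simp [CDiter, Ordinal.limitRecOn_succ]

lemma CDiter_limit (X : Type*) [TopologicalSpace X] (A : Set X) {o : Ordinal}
    (h : Order.IsSuccLimit o) : CDiter X A o = ⋂ (b : Set.Iio o), CDiter X A b.1 := by
  simp [CDiter, Ordinal.limitRecOn_limit _ _ _ _ h]

lemma CDiter_one : CDiter _ Aset 1 = {(0 : lp (fun _ : ℕ => ℝ) ⊤)} := by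
  rw [show (1 : Ordinal) = Order.succ 0 by simp, CDiter_succ, CDiter_zero, CD_Aset]

lemma CDiter_two : CDiter _ Aset 2 = ∅ := by
  rw [show (2 : Ordinal) = Order.succ 1 by simp [one_add_one_eq_two], CDiter_succ, CDiter_one]
  exact CD_countable (Set.countable_singleton _)

lemma CDiter_ge_two : ∀ α : Ordinal, 2 ≤ α → CDiter _ Aset α = ∅ := by
  intro α
  induction α using Ordinal.limitRecOn with
  | zero => intro h; simp at h
  | add_one o ih =>
    rw [Ordinal.add_one_eq_succ]; intro h
    rcases le_or_gt 2 o with h2 | h2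
    · rw [CDiter_succ, ih h2]
      exact CD_countable Set.countable_empty
    · have h1 : o = 1 := by
        have ha : (1:Ordinal) ≤ o := by
          rwa [show (2:Ordinal) = Order.succ 1 by simp [one_add_one_eq_two], Order.succ_le_succ_iff] at h
        have hb : o ≤ 1 := by
          rwa [show (2:Ordinal) = Order.succ 1 by simp [one_add_one_eq_two], Order.lt_succ_iff] at h2
        exact le_antisymm hb ha
      rw [h1, ← show (2 : Ordinal) = Order.succ 1 by simp [one_add_one_eq_two]]
      exact CDiter_two
  | limit o ho ih =>
    intro h
    have h2 : (2:Ordinal) < o := by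
      have h1 : (1:Ordinal) < o := lt_of_lt_of_le one_lt_two h
      have := ho.succ_lt h1
      rwa [show Order.succ (1:Ordinal) = 2 by simp [one_add_one_eq_two]] at this
    rw [CDiter_limit _ _ ho]
    apply Set.eq_empty_of_subset_empty
    intro x hx
    have := Set.mem_iInter.1 hx ⟨2, h2⟩
    rwa [ih 2 h2 le_rfl] at this

theorem exists_rank_two_set_linfty :
    ∃ A : Set (lp (fun _ : ℕ => ℝ) ⊤), IsClosed A ∧ ¬A.Countable ∧
      (∃ p, CD _ A = {p}) ∧ CD _ (CD _ A) = ∅ ∧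
      (∀ P ⊆ A, Perfect P → P = ∅) ∧
      CDiter _ A 1 ≠ CDiter _ A 2 ∧
      (∀ α : Ordinal, 2 ≤ α → CDiter _ A α = CDiter _ A 2) := by
  refine ⟨Aset, Aset_closed, not_countable_Aset, ⟨0, CD_Aset⟩, ?_, perfect_sub_empty, ?_, ?_⟩
  · rw [CD_Aset]
    exact CD_countable (Set.countable_singleton _)
  · rw [CDiter_one, CDiter_two]
    exact Set.singleton_ne_empty _
  · intro α hα
    rw [CDiter_ge_two α hα, CDiter_two]
end

section
/- Fix a ∈ ℝ and let A ⊆ ℓ∞ consist of the constant sequence (a,a,a,…) together with all sequences x such that for some m ∈ ℕ and some infinite set S ⊆ ℕ, x_n = a + 1/m for n ∈ S and x_n = a otherwise. Then A is a closed uncountable subset of ℓ∞ and the only condensation point of A is the constant sequence (a,a,a,…). -/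
set_option synthInstance.maxHeartbeats 1000000
set_option maxHeartbeats 1000000

/-- The set of sequences equal to `a` off an infinite set `S`, where they equal
`a + 1/m`, together with the constant sequence `a`. -/
def rankTwoSet (a : ℝ) : Set (lp (fun _ : ℕ => ℝ) ⊤) :=
  {x | (∀ n, x n = a) ∨
    ∃ m : ℕ, 0 < m ∧ ∃ S : Set ℕ, S.Infinite ∧
      (∀ n ∈ S, x n = a + 1 / (m : ℝ)) ∧ ∀ n ∉ S, x n = a}

noncomputable def elemSeq (a : ℝ) (m : ℕ) (S : Set ℕ) : lp (fun _ : ℕ => ℝ) ⊤ :=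
  ⟨fun n => a + S.indicator (fun _ => 1 / (m : ℝ)) n, by
    apply memℓp_infty
    refine ⟨|a| + |1 / (m : ℝ)|, ?_⟩
    rintro x ⟨n, rfl⟩
    simp only [Real.norm_eq_abs]
    refine (abs_add_le _ _).trans (add_le_add le_rfl ?_)
    by_cases h : n ∈ S
    · rw [Set.indicator_of_mem h]
    · rw [Set.indicator_of_notMem h]; simp⟩

lemma elemSeq_apply_of_mem (a : ℝ) (m : ℕ) {S : Set ℕ} {n : ℕ} (h : n ∈ S) :
    elemSeq a m S n = a + 1 / (m : ℝ) := by
  show a + S.indicator _ n = _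
  rw [Set.indicator_of_mem h]

lemma elemSeq_apply_of_notMem (a : ℝ) (m : ℕ) {S : Set ℕ} {n : ℕ} (h : n ∉ S) :
    elemSeq a m S n = a := by
  show a + S.indicator _ n = _
  rw [Set.indicator_of_notMem h, add_zero]

lemma elemSeq_mem (a : ℝ) {m : ℕ} (hm : 0 < m) {S : Set ℕ} (hS : S.Infinite) :
    elemSeq a m S ∈ rankTwoSet a :=
  Or.inr ⟨m, hm, S, hS, fun _ h => elemSeq_apply_of_mem a m h,
    fun _ h => elemSeq_apply_of_notMem a m h⟩

lemma elemSeq_injective (a : ℝ) {m : ℕ} (hm : 0 < m) :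
    Function.Injective (elemSeq a m) := by
  intro S S' h
  have hne : (1 : ℝ) / m ≠ 0 := by positivity
  ext n
  constructor
  · intro hn
    by_contra hn'
    have := elemSeq_apply_of_mem a m hn
    have h2 := elemSeq_apply_of_notMem a m hn'
    rw [h] at this
    rw [this] at h2
    exact hne (by linarith)
  · intro hn
    by_contra hn'
    have := elemSeq_apply_of_mem a m hn
    have h2 := elemSeq_apply_of_notMem a m hn'
    rw [h] at h2
    rw [this] at h2
    exact hne (by linarith)

/-- The constant sequence. -/
noncomputable def constSeq (a : ℝ) : lp (fun _ : ℕ => ℝ) ⊤ := elemSeq a 1 ∅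

lemma constSeq_apply (a : ℝ) (n : ℕ) : constSeq a n = a :=
  elemSeq_apply_of_notMem a 1 (Set.notMem_empty n)

lemma lp_norm_sub_le {x y : lp (fun _ : ℕ => ℝ) ⊤} {C : ℝ} (hC : 0 ≤ C)
    (h : ∀ n, |x n - y n| ≤ C) : ‖x - y‖ ≤ C := by
  refine lp.norm_le_of_forall_le hC fun n => ?_
  have : (x - y) n = x n - y n := by
    simp [lp.coeFn_sub, Pi.sub_apply]
  rw [this, Real.norm_eq_abs]
  exact h n

lemma lp_abs_sub_le_norm (x y : lp (fun _ : ℕ => ℝ) ⊤) (n : ℕ) :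
    |x n - y n| ≤ ‖x - y‖ := by
  have := lp.norm_apply_le_norm (by simp : (⊤ : ENNReal) ≠ 0) (x - y) n
  have h2 : (x - y) n = x n - y n := by simp [lp.coeFn_sub, Pi.sub_apply]
  rwa [h2, Real.norm_eq_abs] at this

lemma not_countable_infinite_sets : ¬{S : Set ℕ | S.Infinite}.Countable := by
  intro h
  have h2 : {S : Set ℕ | S.Finite}.Countable := Set.Countable.setOf_finite
  have huniv : (Set.univ : Set (Set ℕ)).Countable := by
    have : (Set.univ : Set (Set ℕ)) ⊆ {S | S.Finite} ∪ {S | S.Infinite} := by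
      intro S _
      exact S.finite_or_infinite
    exact (h2.union h).mono this
  have : Countable (Set ℕ) := Set.countable_univ_iff.mp huniv
  obtain ⟨f, hf⟩ := exists_injective_nat (Set ℕ)
  exact Function.cantor_injective f hf

/-- Main quantitative lemma: around any point other than the constant sequence,
some ball meets `rankTwoSet a` in a finite set. -/
lemma finite_ball_inter (a : ℝ) {p : lp (fun _ : ℕ => ℝ) ⊤} (hp : ¬∀ n, p n = a) :
    ∃ r > 0, (Metric.ball p r ∩ rankTwoSet a).Finite := by
  classical
  set c := constSeq a with hc
  have hd : 0 < ‖p - c‖ := by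
    rw [norm_pos_iff, sub_ne_zero]
    intro h
    exact hp fun n => by rw [h]; exact constSeq_apply a n
  set d := ‖p - c‖ with hd'
  refine ⟨d / 3, by positivity, ?_⟩
  set r := d / 3 with hr
  set T := Metric.ball p r ∩ rankTwoSet a with hT
  -- every element of T has the ∃-form
  have hform : ∀ x ∈ T, ∃ m : ℕ, 0 < m ∧ ∃ S : Set ℕ, S.Infinite ∧
      (∀ n ∈ S, x n = a + 1 / (m : ℝ)) ∧ ∀ n ∉ S, x n = a := by
    rintro x ⟨hxb, hxA⟩
    rcases hxA with hconst | h
    · exfalso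
      have hxc : x = c := by
        apply lp.ext
        funext n
        rw [hconst n, constSeq_apply a n]
      rw [Metric.mem_ball, dist_eq_norm, hxc, norm_sub_rev] at hxb
      have h1 : d = ‖p - c‖ := hd'
      have h2 : r = d / 3 := hr
      linarith
    · exact h
  set g : lp (fun _ : ℕ => ℝ) ⊤ → ℕ := fun x =>
    if h : ∃ m : ℕ, 0 < m ∧ ∃ S : Set ℕ, S.Infinite ∧
      (∀ n ∈ S, x n = a + 1 / (m : ℝ)) ∧ ∀ n ∉ S, x n = a then h.choose else 0
    with hg
  -- facts about g x for x ∈ T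
  have hgx : ∀ x ∈ T, 0 < g x ∧ (∀ n, x n = a + 1 / (g x : ℝ) ∨ x n = a) ∧
      2 * r < 1 / (g x : ℝ) := by
    intro x hx
    have hex := hform x hx
    have hgdef : g x = hex.choose := dif_pos hex
    obtain ⟨hm, S, hS, h1, h2⟩ := hex.choose_spec
    simp only [← hgdef] at hm h1 h2
    have hcoord : ∀ n, x n = a + 1 / (g x : ℝ) ∨ x n = a := fun n => by
      by_cases hn : n ∈ S
      · exact Or.inl (h1 n hn)
      · exact Or.inr (h2 n hn)
    refine ⟨hm, hcoord, ?_⟩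
    have hub : ‖x - c‖ ≤ 1 / (g x : ℝ) := by
      refine lp_norm_sub_le (by positivity) fun n => ?_
      rw [constSeq_apply a n]
      rcases hcoord n with h | h <;> rw [h]
      · rw [add_sub_cancel_left, abs_of_nonneg (by positivity : (0:ℝ) ≤ 1 / (g x : ℝ))]
      · rw [sub_self, abs_zero]; positivity
    have hlb : d - r < ‖x - c‖ := by
      have htri : d ≤ ‖p - x‖ + ‖x - c‖ := by
        calc d = ‖p - c‖ := hd'
        _ = ‖p - x + (x - c)‖ := by rw [sub_add_sub_cancel]
        _ ≤ ‖p - x‖ + ‖x - c‖ := norm_add_le _ _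
      have hball : ‖p - x‖ < r := by
        have h := hx.1
        rw [Metric.mem_ball, dist_eq_norm] at h
        rwa [norm_sub_rev]
      linarith
    have : 2 * r = d - r := by rw [hr]; ring
    linarith
  -- injectivity of g on T
  have hinj : Set.InjOn g T := by
    intro x hx y hy hxy
    obtain ⟨hmx, hcx, hrx⟩ := hgx x hx
    obtain ⟨hmy, hcy, hry⟩ := hgx y hy
    by_contra hne
    have hexn : ∃ n, x n ≠ y n := by
      by_contra hall
      push_neg at hall
      exact hne (lp.ext (funext hall))
    obtain ⟨n, hn⟩ := hexn
    have h1m : (0:ℝ) < 1 / (g x : ℝ) := by positivity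
    have habs : |x n - y n| = 1 / (g x : ℝ) := by
      rcases hcx n with h1 | h1 <;> rcases hcy n with h2 | h2
      · rw [← hxy] at h2; exact absurd (h1.trans h2.symm) hn
      · rw [h1, h2, add_sub_cancel_left]; exact abs_of_pos h1m
      · rw [← hxy] at h2
        rw [h1, h2, show a - (a + 1 / (g x : ℝ)) = -(1 / (g x : ℝ)) by ring,
          abs_neg]
        exact abs_of_pos h1m
      · exact absurd (h1.trans h2.symm) hn
    have hle : |x n - y n| ≤ ‖x - y‖ := lp_abs_sub_le_norm x y n
    have hxy2 : ‖x - y‖ < 2 * r := by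
      have h1 := hx.1; have h2 := hy.1
      rw [Metric.mem_ball, dist_eq_norm] at h1 h2
      calc ‖x - y‖ = ‖x - p + (p - y)‖ := by rw [sub_add_sub_cancel]
      _ ≤ ‖x - p‖ + ‖p - y‖ := norm_add_le _ _
      _ < r + r := by
          rw [norm_sub_rev p y]
          exact add_lt_add h1 h2
      _ = 2 * r := by ring
    rw [hxy] at hrx
    rw [habs] at hle
    rw [hxy] at hle
    linarith
  -- image is bounded
  have himg : g '' T ⊆ Set.Iic ⌈1 / (2 * r)⌉₊ := by
    rintro _ ⟨x, hx, rfl⟩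
    obtain ⟨hm, _, hlt⟩ := hgx x hx
    have hr0 : (0:ℝ) < 2 * r := by positivity
    have : (g x : ℝ) < 1 / (2 * r) := by
      rw [lt_div_iff₀ hr0]
      have hgx0 : (0:ℝ) < (g x : ℝ) := by exact_mod_cast hm
      rw [lt_div_iff₀ hgx0] at hlt
      linarith
    have : (g x : ℝ) ≤ (⌈1 / (2 * r)⌉₊ : ℝ) := this.le.trans (Nat.le_ceil _)
    exact_mod_cast this
  exact Set.Finite.of_finite_image ((Set.finite_Iic _).subset himg) hinj

theorem concrete_rank_two_set (a : ℝ) :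
    IsClosed (rankTwoSet a) ∧ ¬(rankTwoSet a).Countable ∧
      CD _ (rankTwoSet a) = {x : lp (fun _ : ℕ => ℝ) ⊤ | ∀ n, x n = a} := by
  refine ⟨?_, ?_, ?_⟩
  · -- closed
    rw [← isOpen_compl_iff]
    rw [isOpen_iff_mem_nhds]
    intro x hx
    have hx' : ¬∀ n, x n = a := fun h => hx (Or.inl h)
    obtain ⟨r, hr, hfin⟩ := finite_ball_inter a hx'
    set F := Metric.ball x r ∩ rankTwoSet a with hF
    have hxF : x ∉ F := fun h => hx h.2
    have hmem : Metric.ball x r ∩ Fᶜ ∈ nhds x := by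
      refine Filter.inter_mem (Metric.ball_mem_nhds x hr) ?_
      exact hfin.isClosed.isOpen_compl.mem_nhds hxF
    refine Filter.mem_of_superset hmem ?_
    rintro y ⟨hyb, hyF⟩ hyA
    exact hyF ⟨hyb, hyA⟩
  · -- uncountable
    intro h
    apply not_countable_infinite_sets
    have hsub : {S : Set ℕ | S.Infinite} ⊆ (elemSeq a 1) ⁻¹' rankTwoSet a :=
      fun S hS => elemSeq_mem a one_pos hS
    exact (h.preimage (elemSeq_injective a one_pos)).mono hsub
  · -- condensation points
    ext p
    simp only [CD, Set.mem_setOf_eq]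
    constructor
    · intro hp
      by_contra hp'
      obtain ⟨r, hr, hfin⟩ := finite_ball_inter a hp'
      exact hp (Metric.ball p r) (Metric.ball_mem_nhds p hr) hfin.countable
    · intro hp U hU hcount
      have hpc : p = constSeq a := by
        apply lp.ext; funext n; rw [hp n, constSeq_apply a n]
      obtain ⟨ε, hε, hball⟩ := Metric.mem_nhds_iff.mp hU
      obtain ⟨k, hk⟩ := exists_nat_one_div_lt hε
      set m := k + 1 with hm
      have hm0 : 0 < m := Nat.succ_pos k
      have hmε : 1 / (m : ℝ) < ε := by
        rw [hm]; push_cast; exact hk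
      apply not_countable_infinite_sets
      have hsub : {S : Set ℕ | S.Infinite} ⊆ (elemSeq a m) ⁻¹' (U ∩ rankTwoSet a) := by
        intro S hS
        refine ⟨hball ?_, elemSeq_mem a hm0 hS⟩
        rw [Metric.mem_ball, dist_eq_norm, hpc]
        refine lt_of_le_of_lt (lp_norm_sub_le (by positivity) fun n => ?_) hmε
        rw [constSeq_apply a n]
        by_cases hn : n ∈ S
        · rw [elemSeq_apply_of_mem a m hn, add_sub_cancel_left,
            abs_of_nonneg (by positivity : (0:ℝ) ≤ 1 / (m : ℝ))]
        · rw [elemSeq_apply_of_notMem a m hn, sub_self, abs_zero]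
          positivity
      exact (hcount.preimage (elemSeq_injective a hm0)).mono hsub
end

section
/- For every countable ordinal α < ω₁ there exists a closed subset A of ℓ∞ such that CD^α(A) ≠ ∅ and CD^{α+1}(A) = ∅; consequently the condensation rank of ℓ∞ is at least ω₁, the first uncountable ordinal. -/
namespace CDProof

open Cardinal

abbrev E := Ordinal × Set ℕ × ℕ

def nn (e : E) : ℕ := e.2.2

def dummyE : E := (0, ∅, 0)

def nsum : List E → ℕ
  | [] => 0
  | e :: t => (nn e + 1) + nsum t

noncomputable def amp (l : List E) : ℝ := (2⁻¹ : ℝ) ^ nsum l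

noncomputable def a1 (e : E) : ℝ := (2⁻¹ : ℝ) ^ (nn e + 1)

noncomputable def a1h : List E → ℝ
  | [] => 0
  | e :: _ => a1 e

lemma amp_pos (l : List E) : 0 < amp l := pow_pos (by norm_num) _

lemma amp_le_one (l : List E) : amp l ≤ 1 := pow_le_one₀ (by norm_num) (by norm_num)

lemma a1_pos (e : E) : 0 < a1 e := pow_pos (by norm_num) _

lemma a1_le_one (e : E) : a1 e ≤ 1 := pow_le_one₀ (by norm_num) (by norm_num)

lemma a1h_nonneg (l : List E) : 0 ≤ a1h l := by
  cases l with
  | nil => exact le_refl 0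
  | cons e t => exact (a1_pos e).le

lemma nsum_append (l t : List E) : nsum (l ++ t) = nsum l + nsum t := by
  induction l with
  | nil => simp [nsum]
  | cons e r ih => simp [nsum, ih]; omega

lemma amp_append (l t : List E) : amp (l ++ t) = amp l * amp t := by
  rw [amp, amp, amp, nsum_append, pow_add]

lemma amp_cons (e : E) (t : List E) : amp (e :: t) = a1 e * amp t := by
  rw [amp, amp, a1, nsum, pow_add]

lemma amp_singleton (e : E) : amp [e] = a1 e := by
  rw [amp_cons, amp, nsum, pow_zero, mul_one]

lemma amp_append_le (l t : List E) : amp (l ++ t) ≤ amp l := by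
  rw [amp_append]
  exact mul_le_of_le_one_right (amp_pos l).le (amp_le_one t)

/-! ### trees -/

def ok : Ordinal → List E → Prop
  | _, [] => True
  | a, e :: t => e.1 < a ∧ ok e.1 t

def rk : Ordinal → List E → Ordinal
  | a, [] => a
  | _, e :: t => rk e.1 t

lemma ok_append (a : Ordinal) (l t : List E) :
    ok a (l ++ t) ↔ ok a l ∧ ok (rk a l) t := by
  induction l generalizing a with
  | nil => simp [ok, rk]
  | cons e r ih => simp [ok, rk, ih, and_assoc]

lemma rk_append (a : Ordinal) (l t : List E) : rk a (l ++ t) = rk (rk a l) t := by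
  induction l generalizing a with
  | nil => simp [rk]
  | cons e r ih => simp [rk, ih]

lemma rk_le (a : Ordinal) (l : List E) (h : ok a l) : rk a l ≤ a := by
  induction l generalizing a with
  | nil => exact le_refl a
  | cons e r ih => exact le_trans (ih e.1 h.2) h.1.le

lemma rk_cons_lt (a : Ordinal) (e : E) (t : List E) (h : ok a (e :: t)) :
    rk a (e :: t) < a :=
  lt_of_le_of_lt (rk_le e.1 t h.2) h.1

lemma mem_lt (a : Ordinal) (l : List E) (h : ok a l) (e : E) (he : e ∈ l) : e.1 < a := by
  induction l generalizing a with
  | nil => cases he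
  | cons e' r ih =>
    rcases List.mem_cons.1 he with rfl | hmem
    · exact h.1
    · exact lt_trans (ih e'.1 h.2 hmem) h.1

/-! ### patterns and points -/

def pat (f : Ordinal → ℕ) (e : E) : Set ℕ :=
  {j | j = 0 ∨ (∃ m ∈ e.2.1, j = 3 * m + 1) ∨ j = 3 * f e.1 + 2 ∨ j = 3 * nn e + 3}

lemma zero_mem_pat (f : Ordinal → ℕ) (e : E) : 0 ∈ pat f e := Or.inl rfl

open Classical

noncomputable def ptf (f : Ordinal → ℕ) (l : List E) : ℕ → ℝ := fun k =>
  if (Nat.unpair k).1 < l.length ∧ (Nat.unpair k).2 ∈ pat f (l.getD (Nat.unpair k).1 dummyE)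
  then amp (l.take ((Nat.unpair k).1 + 1)) else 0

lemma ptf_pair (f : Ordinal → ℕ) (l : List E) (i j : ℕ) :
    ptf f l (Nat.pair i j) =
      if i < l.length ∧ j ∈ pat f (l.getD i dummyE) then amp (l.take (i + 1)) else 0 := by
  simp [ptf, Nat.unpair_pair]

lemma ptf_nonneg (f : Ordinal → ℕ) (l : List E) (k : ℕ) : 0 ≤ ptf f l k := by
  unfold ptf
  split
  · exact (amp_pos _).le
  · exact le_refl 0

lemma ptf_le_one (f : Ordinal → ℕ) (l : List E) (k : ℕ) : ptf f l k ≤ 1 := by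
  unfold ptf
  split
  · exact amp_le_one _
  · exact zero_le_one

lemma ptf_eval_lt (f : Ordinal → ℕ) (p t : List E) {i : ℕ} (h : i < p.length) (j : ℕ) :
    ptf f (p ++ t) (Nat.pair i j) = ptf f p (Nat.pair i j) := by
  have hg : (p ++ t).getD i dummyE = p.getD i dummyE := List.getD_append _ _ _ _ h
  have ht : (p ++ t).take (i + 1) = p.take (i + 1) := List.take_append_of_le_length h
  rw [ptf_pair, ptf_pair, hg, ht]
  have h1 : i < (p ++ t).length := by simp; omega
  by_cases hj : j ∈ pat f (p.getD i dummyE)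
  · rw [if_pos ⟨h1, hj⟩, if_pos ⟨h, hj⟩]
  · rw [if_neg (by tauto), if_neg (by tauto)]

lemma ptf_eval_ge_le (f : Ordinal → ℕ) (p t : List E) {i : ℕ} (h : p.length ≤ i) (j : ℕ) :
    |ptf f (p ++ t) (Nat.pair i j)| ≤ amp p * a1h t := by
  have hrhs : 0 ≤ amp p * a1h t := mul_nonneg (amp_pos p).le (a1h_nonneg t)
  rw [ptf_pair]
  split
  · next hc =>
    obtain ⟨hi, -⟩ := hc
    cases t with
    | nil => simp at hi; omega
    | cons e r =>
      rw [abs_of_nonneg (amp_pos _).le]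
      have htk : (p ++ e :: r).take (i + 1) = p ++ (e :: r).take (i + 1 - p.length) := by
        rw [List.take_append, List.take_of_length_le (by omega)]
      rw [htk, amp_append]
      have h1 : i + 1 - p.length = (i - p.length) + 1 := by omega
      rw [h1, List.take_succ_cons, amp_cons]
      have hmono : amp p * (a1 e * amp (r.take (i - p.length))) ≤ amp p * a1 e :=
        mul_le_mul_of_nonneg_left
          (mul_le_of_le_one_right (a1_pos e).le (amp_le_one (r.take (i - p.length))))
          (amp_pos p).le
      simpa [a1h] using hmono
  · simpa using hrhs

/-! ### points in lp -/

noncomputable abbrev Xsp := lp (fun _ : ℕ => ℝ) (⊤ : ENNReal)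

lemma ptf_bdd (f : Ordinal → ℕ) (l : List E) :
    BddAbove (Set.range fun k => ‖ptf f l k‖) := by
  refine ⟨1, ?_⟩
  rintro v ⟨k, rfl⟩
  simpa [Real.norm_eq_abs, abs_of_nonneg (ptf_nonneg f l k)] using ptf_le_one f l k

noncomputable def pt (f : Ordinal → ℕ) (l : List E) : Xsp :=
  ⟨ptf f l, memℓp_infty (ptf_bdd f l)⟩

lemma pt_apply (f : Ordinal → ℕ) (l : List E) (k : ℕ) : (pt f l : ∀ _ : ℕ, ℝ) k = ptf f l k := rfl

lemma sub_apply (x y : Xsp) (k : ℕ) : (x - y : Xsp) k = x k - y k := by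
  rw [lp.coeFn_sub, Pi.sub_apply]

lemma dist_pt_le (f : Ordinal → ℕ) (p t₁ t₂ : List E) :
    dist (pt f (p ++ t₁)) (pt f (p ++ t₂)) ≤ max (amp p * a1h t₁) (amp p * a1h t₂) := by
  rw [dist_eq_norm]
  have hM : (0:ℝ) ≤ max (amp p * a1h t₁) (amp p * a1h t₂) :=
    le_max_of_le_left (mul_nonneg (amp_pos p).le (a1h_nonneg t₁))
  apply lp.norm_le_of_forall_le hM
  intro k
  rw [sub_apply, pt_apply, pt_apply, Real.norm_eq_abs]
  have hk : Nat.pair (Nat.unpair k).1 (Nat.unpair k).2 = k := Nat.pair_unpair k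
  set i := (Nat.unpair k).1
  set j := (Nat.unpair k).2
  rw [← hk]
  rcases lt_or_ge i p.length with h | h
  · rw [ptf_eval_lt f p t₁ h, ptf_eval_lt f p t₂ h, sub_self, abs_zero]
    exact hM
  · have h1 := ptf_eval_ge_le f p t₁ h j
    have h2 := ptf_eval_ge_le f p t₂ h j
    have n1 := ptf_nonneg f (p ++ t₁) (Nat.pair i j)
    have n2 := ptf_nonneg f (p ++ t₂) (Nat.pair i j)
    rw [abs_of_nonneg n1] at h1
    rw [abs_of_nonneg n2] at h2
    rw [abs_sub_le_iff]
    constructor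
    · have := le_max_left (amp p * a1h t₁) (amp p * a1h t₂); linarith
    · have := le_max_right (amp p * a1h t₁) (amp p * a1h t₂); linarith

lemma le_dist_of_coord (x y : Xsp) (k : ℕ) (c : ℝ) (h : c ≤ |(x : ∀ _ : ℕ, ℝ) k - y k|) :
    c ≤ dist x y := by
  rw [dist_eq_norm]
  refine h.trans ?_
  have := lp.norm_apply_le_norm (E := fun _ : ℕ => ℝ) ENNReal.top_ne_zero (x - y) k
  rw [sub_apply, Real.norm_eq_abs] at this
  exact this

lemma ptf_head (f : Ordinal → ℕ) (p : List E) (e : E) (t : List E) (j : ℕ) :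
    ptf f (p ++ e :: t) (Nat.pair p.length j) =
      if j ∈ pat f e then amp p * a1 e else 0 := by
  rw [ptf_pair]
  have hget : (p ++ e :: t).getD p.length dummyE = e := by
    rw [List.getD_append_right _ _ _ _ le_rfl]
    simp [List.getD]
  have hlen : p.length < (p ++ e :: t).length := by simp
  have htake : (p ++ e :: t).take (p.length + 1) = p ++ [e] := by
    rw [List.take_append, List.take_of_length_le (by omega)]
    simp
  rw [hget, htake, amp_append, amp_singleton]
  by_cases hj : j ∈ pat f e
  · rw [if_pos ⟨hlen, hj⟩, if_pos hj]
  · rw [if_neg (by tauto), if_neg hj]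

lemma ptf_at_len (f : Ordinal → ℕ) (p : List E) (j : ℕ) :
    ptf f p (Nat.pair p.length j) = 0 := by
  rw [ptf_pair, if_neg]
  rintro ⟨h, -⟩
  omega

lemma dist_pt_ge_nil (f : Ordinal → ℕ) (p : List E) (e : E) (t : List E) :
    amp p * a1 e ≤ dist (pt f (p ++ e :: t)) (pt f p) := by
  apply le_dist_of_coord _ _ (Nat.pair p.length 0)
  rw [pt_apply, pt_apply, ptf_head, ptf_at_len, if_pos (zero_mem_pat f e), sub_zero,
    abs_of_nonneg (mul_nonneg (amp_pos p).le (a1_pos e).le)]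

/-- separation auxiliary: if some index is in `pat e₁` but not in `pat e₂`, and the
first amplitude dominates. -/
lemma dist_ge_aux (f : Ordinal → ℕ) (p : List E) (e₁ e₂ : E) (t₁ t₂ : List E) (j : ℕ)
    (hj₁ : j ∈ pat f e₁) (hj₂ : j ∉ pat f e₂) (hge : a1 e₂ ≤ a1 e₁) :
    max (amp p * a1 e₁) (amp p * a1 e₂) ≤
      dist (pt f (p ++ e₁ :: t₁)) (pt f (p ++ e₂ :: t₂)) := by
  have hmax : max (amp p * a1 e₁) (amp p * a1 e₂) = amp p * a1 e₁ :=
    max_eq_left (mul_le_mul_of_nonneg_left hge (amp_pos p).le)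
  rw [hmax]
  apply le_dist_of_coord _ _ (Nat.pair p.length j)
  rw [pt_apply, pt_apply, ptf_head, ptf_head, if_pos hj₁, if_neg hj₂, sub_zero,
    abs_of_nonneg (mul_nonneg (amp_pos p).le (a1_pos e₁).le)]

lemma dist_pt_ge {α : Ordinal} {f : Ordinal → ℕ} (hf : Set.InjOn f (Set.Iic α))
    {e₁ e₂ : E} (hb₁ : e₁.1 ≤ α) (hb₂ : e₂.1 ≤ α) (hne : e₁ ≠ e₂) (p t₁ t₂ : List E) :
    max (amp p * a1 e₁) (amp p * a1 e₂) ≤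
      dist (pt f (p ++ e₁ :: t₁)) (pt f (p ++ e₂ :: t₂)) := by
  obtain ⟨β₁, S₁, n₁⟩ := e₁
  obtain ⟨β₂, S₂, n₂⟩ := e₂
  -- helper for the n₁ < n₂ case
  have hnlt : ∀ (β₁ β₂ : Ordinal) (S₁ S₂ : Set ℕ) (n₁ n₂ : ℕ) (t₁ t₂ : List E), n₁ < n₂ →
      max (amp p * a1 (β₁, S₁, n₁)) (amp p * a1 (β₂, S₂, n₂)) ≤
        dist (pt f (p ++ (β₁, S₁, n₁) :: t₁)) (pt f (p ++ (β₂, S₂, n₂) :: t₂)) := by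
    intro β₁ β₂ S₁ S₂ n₁ n₂ t₁ t₂ hlt
    apply dist_ge_aux f p _ _ t₁ t₂ (3 * n₁ + 3)
    · exact Or.inr (Or.inr (Or.inr rfl))
    · rintro (h | ⟨m, -, h⟩ | h | h) <;> simp [nn] at h <;> omega
    · have h1 : a1 (β₂, S₂, n₂) = (2⁻¹:ℝ) ^ (n₂+1) := rfl
      have h2 : a1 (β₁, S₁, n₁) = (2⁻¹:ℝ) ^ (n₁+1) := rfl
      rw [h1, h2]
      exact pow_le_pow_of_le_one (by norm_num) (by norm_num) (by omega)
  rcases lt_trichotomy n₁ n₂ with hlt | heq | hgt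
  · exact hnlt β₁ β₂ S₁ S₂ n₁ n₂ t₁ t₂ hlt
  · subst heq
    -- same n; β or S differ
    by_cases hβ : β₁ = β₂
    · subst hβ
      have hS : S₁ ≠ S₂ := by
        intro h; exact hne (by rw [h])
      have : (∃ m, m ∈ S₁ ∧ m ∉ S₂) ∨ (∃ m, m ∈ S₂ ∧ m ∉ S₁) := by
        by_contra h
        push_neg at h
        exact hS (Set.eq_of_subset_of_subset (fun m hm => h.1 m hm) (fun m hm => h.2 m hm))
      have hsym : ∀ (S₁ S₂ : Set ℕ) (t₁ t₂ : List E), (∃ m, m ∈ S₁ ∧ m ∉ S₂) →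
          max (amp p * a1 (β₁, S₁, n₁)) (amp p * a1 (β₁, S₂, n₁)) ≤
            dist (pt f (p ++ (β₁, S₁, n₁) :: t₁)) (pt f (p ++ (β₁, S₂, n₁) :: t₂)) := by
        rintro S₁ S₂ t₁ t₂ ⟨m, hm₁, hm₂⟩
        apply dist_ge_aux f p _ _ t₁ t₂ (3 * m + 1)
        · exact Or.inr (Or.inl ⟨m, hm₁, rfl⟩)
        · rintro (h | ⟨m', hm', h⟩ | h | h) <;> simp [nn] at h ⊢ <;> try omega
          · have : m' = m := by omega
            subst this; exact hm₂ hm'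
        · exact le_refl _
      rcases this with h | h
      · exact hsym S₁ S₂ t₁ t₂ h
      · rw [max_comm, dist_comm]
        exact hsym S₂ S₁ t₂ t₁ h
    · -- β differ
      apply dist_ge_aux f p _ _ t₁ t₂ (3 * f β₁ + 2)
      · exact Or.inr (Or.inr (Or.inl rfl))
      · rintro (h | ⟨m, -, h⟩ | h | h) <;> simp [nn] at h ⊢ <;> try omega
        · have : f β₁ = f β₂ := by omega
          exact hβ (hf hb₁ hb₂ this)
      · exact le_refl _
  · rw [max_comm, dist_comm]
    exact hnlt β₂ β₁ S₂ S₁ n₂ n₁ t₂ t₁ hgt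

/-! ### decomposition and injectivity -/

lemma decomp : ∀ l m : List E, l ≠ m → ∃ p t₁ t₂, l = p ++ t₁ ∧ m = p ++ t₂ ∧
    ¬(t₁ = [] ∧ t₂ = []) ∧
    (∀ e₁ r₁ e₂ r₂, t₁ = e₁ :: r₁ → t₂ = e₂ :: r₂ → e₁ ≠ e₂) := by
  intro l
  induction l with
  | nil =>
    intro m hm
    refine ⟨[], [], m, rfl, rfl, ?_, ?_⟩
    · rintro ⟨-, rfl⟩; exact hm rfl
    · intro e₁ r₁ e₂ r₂ h1 h2; cases h1
  | cons a l ih =>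
    intro m hm
    cases m with
    | nil =>
      refine ⟨[], a :: l, [], rfl, rfl, ?_, ?_⟩
      · rintro ⟨h, -⟩; cases h
      · intro e₁ r₁ e₂ r₂ h1 h2; cases h2
    | cons b m' =>
      by_cases hab : a = b
      · subst hab
        have hlm : l ≠ m' := fun h => hm (by rw [h])
        obtain ⟨p, t₁, t₂, h1, h2, h3, h4⟩ := ih m' hlm
        exact ⟨a :: p, t₁, t₂, by simp [h1], by simp [h2], h3, h4⟩
      · refine ⟨[], a :: l, b :: m', rfl, rfl, ?_, ?_⟩
        · rintro ⟨h, -⟩; cases h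
        · intro e₁ r₁ e₂ r₂ h1 h2
          injection h1 with he₁ hr₁
          injection h2 with he₂ hr₂
          subst he₁
          subst he₂
          exact hab

lemma pt_inj {α : Ordinal} {f : Ordinal → ℕ} (hf : Set.InjOn f (Set.Iic α))
    {l m : List E} (hl : ok α l) (hm : ok α m) (heq : pt f l = pt f m) : l = m := by
  by_contra hne
  obtain ⟨p, t₁, t₂, rfl, rfl, h3, h4⟩ := decomp _ _ hne
  have hdistzero : dist (pt f (p ++ t₁)) (pt f (p ++ t₂)) = 0 := by rw [heq, dist_self]
  cases t₁ with
  | nil =>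
    cases t₂ with
    | nil => exact h3 ⟨rfl, rfl⟩
    | cons e r =>
      have := dist_pt_ge_nil f p e r
      rw [dist_comm] at hdistzero
      simp only [List.append_nil] at hdistzero
      rw [hdistzero] at this
      nlinarith [amp_pos p, a1_pos e]
  | cons e₁ r₁ =>
    cases t₂ with
    | nil =>
      have := dist_pt_ge_nil f p e₁ r₁
      simp only [List.append_nil] at hdistzero
      rw [hdistzero] at this
      nlinarith [amp_pos p, a1_pos e₁]
    | cons e₂ r₂ =>
      have hb₁ : e₁.1 ≤ α :=
        (mem_lt α _ hl e₁ (List.mem_append_right p List.mem_cons_self)).le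
      have hb₂ : e₂.1 ≤ α :=
        (mem_lt α _ hm e₂ (List.mem_append_right p List.mem_cons_self)).le
      have := dist_pt_ge hf hb₁ hb₂ (h4 e₁ r₁ e₂ r₂ rfl rfl) p r₁ r₂
      rw [hdistzero] at this
      have h5 : amp p * a1 e₁ ≤ (0:ℝ) := le_trans (le_max_left _ _) this
      nlinarith [amp_pos p, a1_pos e₁]

/-! ### the derived sets -/

def D (f : Ordinal → ℕ) (α γ : Ordinal) : Set Xsp :=
  {x | ∃ l, ok α l ∧ γ ≤ rk α l ∧ x = pt f l}

lemma D_antitone {f : Ordinal → ℕ} {α γ γ' : Ordinal} (h : γ ≤ γ') :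
    D f α γ' ⊆ D f α γ := by
  rintro x ⟨l, h1, h2, rfl⟩
  exact ⟨l, h1, le_trans h h2, rfl⟩

lemma not_countable_of_inj {B : Set Xsp} (g : Set ℕ → Xsp) (hg : Function.Injective g)
    (hsub : Set.range g ⊆ B) : ¬ B.Countable := by
  intro h
  have h2 : (Set.range g).Countable := h.mono hsub
  have h3 : #(Set.range g) < Cardinal.aleph 1 :=
    (Cardinal.countable_iff_lt_aleph_one _).1 h2
  rw [Cardinal.mk_range_eq _ hg, Cardinal.mk_set, Cardinal.mk_nat,
    Cardinal.two_power_aleph0] at h3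
  exact absurd h3 (not_lt.2 Cardinal.aleph_one_le_continuum)

/-! ### closedness -/

lemma closed_D {α : Ordinal} {f : Ordinal → ℕ} (hf : Set.InjOn f (Set.Iic α)) (γ : Ordinal) :
    IsClosed (D f α γ) := by
  apply isClosed_of_closure_subset
  intro x hx
  set P : List E → Prop := fun l => ok α l ∧ ∀ ε > 0, ∃ t, ok α (l ++ t) ∧
    γ ≤ rk α (l ++ t) ∧ dist x (pt f (l ++ t)) < ε with hPdef
  have hP0 : P [] := by
    refine ⟨trivial, fun ε hε => ?_⟩
    obtain ⟨y, hyD, hyd⟩ := Metric.mem_closure_iff.1 hx ε hε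
    obtain ⟨l, h1, h2, rfl⟩ := hyD
    exact ⟨l, by simpa using h1, by simpa using h2, by simpa using hyd⟩
  obtain ⟨ρ, hρ, hmin⟩ := Ordinal.lt_wf.has_min (rk α '' {l | P l}) ⟨_, ⟨[], hP0, rfl⟩⟩
  obtain ⟨l, hl, rfl⟩ := hρ
  replace hl : P l := hl
  by_cases hcase : ∀ ε > 0, ∃ t, (ok α (l ++ t) ∧ γ ≤ rk α (l ++ t) ∧
      dist x (pt f (l ++ t)) < ε) ∧ amp l * a1h t < ε
  · have hxl : x = pt f l := by
      have hd : ∀ ε > 0, dist x (pt f l) < 2 * ε := by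
        intro ε hε
        obtain ⟨t, ⟨hok, hrk, hdist⟩, hamp⟩ := hcase ε hε
        have h2 : dist (pt f (l ++ t)) (pt f l) ≤ amp l * a1h t := by
          have h3 := dist_pt_le f l t []
          have h4 : amp l * a1h [] = 0 := by simp [a1h]
          rw [h4] at h3
          simpa [max_eq_left (mul_nonneg (amp_pos l).le (a1h_nonneg t))] using h3
        calc dist x (pt f l) ≤ dist x (pt f (l ++ t)) + dist (pt f (l ++ t)) (pt f l) :=
              dist_triangle _ _ _
          _ < 2 * ε := by linarith
      apply eq_of_dist_eq_zero
      by_contra hne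
      have hpos : 0 < dist x (pt f l) := lt_of_le_of_ne dist_nonneg (Ne.symm hne)
      have := hd (dist x (pt f l) / 4) (by linarith)
      linarith
    have hrkl : γ ≤ rk α l := by
      obtain ⟨t, ⟨hok, hrkt, -⟩, -⟩ := hcase 1 one_pos
      refine le_trans hrkt ?_
      rw [rk_append]
      exact rk_le _ _ ((ok_append α l t).1 hok).2
    exact ⟨l, hl.1, hrkl, hxl⟩
  · exfalso
    push_neg at hcase
    obtain ⟨ε₀, hε₀, hkey⟩ := hcase
    obtain ⟨t₀, hok₀, hrk₀, hd₀⟩ := hl.2 (ε₀ / 5) (by linarith)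
    have hd₀' : dist x (pt f (l ++ t₀)) < ε₀ := by linarith
    have hbig₀ : ε₀ ≤ amp l * a1h t₀ := hkey t₀ ⟨hok₀, hrk₀, hd₀'⟩
    obtain ⟨e, r, rfl⟩ : ∃ e r, t₀ = e :: r := by
      cases t₀ with
      | nil => exfalso; simp [a1h] at hbig₀; linarith
      | cons e r => exact ⟨e, r, rfl⟩
    have hA : ε₀ ≤ amp l * a1 e := by simpa [a1h] using hbig₀
    have hhead : ∀ t', ok α (l ++ t') → γ ≤ rk α (l ++ t') →
        dist x (pt f (l ++ t')) < ε₀ / 5 → ∃ r', t' = e :: r' := by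
      intro t' h1 h2 h3
      have h3' : dist x (pt f (l ++ t')) < ε₀ := by linarith
      have hbig' : ε₀ ≤ amp l * a1h t' := hkey t' ⟨h1, h2, h3'⟩
      obtain ⟨e', r', rfl⟩ : ∃ e' r', t' = e' :: r' := by
        cases t' with
        | nil => exfalso; simp [a1h] at hbig'; linarith
        | cons e' r' => exact ⟨e', r', rfl⟩
      by_cases he : e' = e
      · exact ⟨r', by rw [he]⟩
      exfalso
      have hb₁ : e.1 ≤ α :=
        (mem_lt α _ hok₀ e (List.mem_append_right l List.mem_cons_self)).le
      have hb₂ : e'.1 ≤ α :=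
        (mem_lt α _ h1 e' (List.mem_append_right l List.mem_cons_self)).le
      have hsep := dist_pt_ge hf hb₁ hb₂ (fun hh => he hh.symm) l r r'
      have htri : dist (pt f (l ++ e :: r)) (pt f (l ++ e' :: r')) < 2 * (ε₀ / 5) := by
        calc dist (pt f (l ++ e :: r)) (pt f (l ++ e' :: r'))
            ≤ dist x (pt f (l ++ e :: r)) + dist x (pt f (l ++ e' :: r')) :=
              dist_triangle_left _ _ _
          _ < 2 * (ε₀ / 5) := by linarith
      have : ε₀ ≤ dist (pt f (l ++ e :: r)) (pt f (l ++ e' :: r')) :=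
        le_trans (le_trans hA (le_max_left _ _)) hsep
      linarith
    have hoke : ok α (l ++ [e]) := by
      rw [ok_append]
      have := (ok_append α l (e :: r)).1 hok₀
      exact ⟨this.1, this.2.1, trivial⟩
    have hPe : P (l ++ [e]) := by
      refine ⟨hoke, fun ε hε => ?_⟩
      obtain ⟨t', h1, h2, h3⟩ := hl.2 (min ε (ε₀ / 5)) (lt_min hε (by linarith))
      obtain ⟨r', rfl⟩ := hhead t' h1 h2 (lt_of_lt_of_le h3 (min_le_right _ _))
      have hle : (l ++ [e]) ++ r' = l ++ e :: r' := by simp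
      refine ⟨r', ?_, ?_, ?_⟩
      · rw [hle]; exact h1
      · rw [hle]; exact h2
      · rw [hle]; exact lt_of_lt_of_le h3 (min_le_left _ _)
    have hlt : rk α (l ++ [e]) < rk α l := by
      rw [rk_append]
      have h5 : e.1 < rk α l := ((ok_append α l (e :: r)).1 hok₀).2.1
      simpa [rk] using h5
    exact hmin _ ⟨l ++ [e], hPe, rfl⟩ hlt

/-! ### the condensation step -/

lemma CD_D {α : Ordinal} {f : Ordinal → ℕ} (hf : Set.InjOn f (Set.Iic α)) (γ : Ordinal) :
    CD Xsp (D f α γ) = D f α (γ + 1) := by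
  apply Set.eq_of_subset_of_subset
  · intro x hx
    have hclos : x ∈ closure (D f α γ) := by
      rw [mem_closure_iff_nhds]
      intro U hU
      rcases Set.eq_empty_or_nonempty (U ∩ D f α γ) with he | hne
      · exact absurd (he ▸ Set.countable_empty) (hx U hU)
      · exact hne
    rw [(closed_D hf γ).closure_eq] at hclos
    obtain ⟨l, hok, hrk, rfl⟩ := hclos
    refine ⟨l, hok, ?_, rfl⟩
    rw [Ordinal.add_one_eq_succ, Order.succ_le_iff]
    rcases lt_or_eq_of_le hrk with h | h
    · exact h
    exfalso
    have hU : Metric.ball (pt f l) (amp l) ∈ nhds (pt f l) :=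
      Metric.ball_mem_nhds _ (amp_pos l)
    apply hx _ hU
    apply Set.Countable.mono _ (Set.countable_singleton (pt f l))
    rintro y ⟨hyb, m, hokm, hrkm, rfl⟩
    simp only [Set.mem_singleton_iff]
    by_cases hml : m = l
    · rw [hml]
    exfalso
    obtain ⟨p, t₁, t₂, hl1, hm1, h3, h4⟩ := decomp l m (fun hh => hml hh.symm)
    have hyb' : dist (pt f m) (pt f l) < amp l := Metric.mem_ball.1 hyb
    cases t₁ with
    | nil =>
      rw [List.append_nil] at hl1
      subst hl1
      obtain ⟨e₂, r₂, rfl⟩ : ∃ e₂ r₂, t₂ = e₂ :: r₂ := by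
        cases t₂ with
        | nil => exact absurd ⟨rfl, rfl⟩ h3
        | cons e₂ r₂ => exact ⟨e₂, r₂, rfl⟩
      subst hm1
      have hlt : rk α (l ++ e₂ :: r₂) < rk α l := by
        rw [rk_append]
        exact rk_cons_lt _ _ _ ((ok_append α l (e₂ :: r₂)).1 hokm).2
      rw [← h] at hlt
      exact absurd hrkm (not_le.2 hlt)
    | cons e₁ r₁ =>
      subst hl1
      have hbound : amp p * a1 e₁ ≤ dist (pt f m) (pt f (p ++ e₁ :: r₁)) := by
        cases t₂ with
        | nil =>
          rw [List.append_nil] at hm1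
          subst hm1
          rw [dist_comm]
          exact dist_pt_ge_nil f m e₁ r₁
        | cons e₂ r₂ =>
          subst hm1
          have hb₁ : e₁.1 ≤ α :=
            (mem_lt α _ hok e₁ (List.mem_append_right p List.mem_cons_self)).le
          have hb₂ : e₂.1 ≤ α :=
            (mem_lt α _ hokm e₂ (List.mem_append_right p List.mem_cons_self)).le
          rw [dist_comm]
          exact le_trans (le_max_left _ _)
            (dist_pt_ge hf hb₁ hb₂ (h4 e₁ r₁ e₂ r₂ rfl rfl) p r₁ r₂)
      have hampl : amp (p ++ e₁ :: r₁) ≤ amp p * a1 e₁ := by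
        rw [amp_append, amp_cons]
        exact mul_le_mul_of_nonneg_left
          (mul_le_of_le_one_right (a1_pos e₁).le (amp_le_one r₁)) (amp_pos p).le
      linarith
  · rintro x ⟨l, hok, hrk, rfl⟩
    intro U hU
    obtain ⟨ε, hε, hball⟩ := Metric.mem_nhds_iff.1 hU
    have hγlt : γ < rk α l := by rwa [Ordinal.add_one_eq_succ, Order.succ_le_iff] at hrk
    obtain ⟨n, hn⟩ := exists_pow_lt_of_lt_one hε (by norm_num : (2⁻¹:ℝ) < 1)
    have hb : γ ≤ α := le_trans hγlt.le (rk_le α l hok)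
    set g : Set ℕ → Xsp := fun S => pt f (l ++ [(γ, S, n)]) with hg
    have hchild : ∀ S : Set ℕ, ok α (l ++ [(γ, S, n)]) ∧ rk α (l ++ [(γ, S, n)]) = γ := by
      intro S
      constructor
      · rw [ok_append]
        exact ⟨hok, hγlt, trivial⟩
      · rw [rk_append]
        rfl
    apply not_countable_of_inj g
    · intro S S' hSS'
      by_contra hne
      have he : ((γ, S, n) : E) ≠ (γ, S', n) := by
        intro hh
        exact hne (congrArg (fun e : E => e.2.1) hh)
      have hd := dist_pt_ge hf hb hb he l [] []
      rw [show pt f (l ++ [(γ, S, n)]) = g S from rfl,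
        show pt f (l ++ [(γ, S', n)]) = g S' from rfl, hSS', dist_self] at hd
      have := le_trans (le_max_left _ _) hd
      nlinarith [amp_pos l, a1_pos ((γ, S, n) : E)]
    · rintro y ⟨S, rfl⟩
      refine ⟨hball ?_, l ++ [(γ, S, n)], (hchild S).1, le_of_eq (hchild S).2.symm, rfl⟩
      rw [Metric.mem_ball]
      have h1 := dist_pt_le f l [(γ, S, n)] []
      have h2 : amp l * a1h [(γ, S, n)] ≤ (2⁻¹ : ℝ) ^ (n + 1) := by
        have : a1h [((γ, S, n) : E)] = (2⁻¹ : ℝ) ^ (n + 1) := rfl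
        rw [this]
        nlinarith [amp_pos l, amp_le_one l, pow_pos (show (0:ℝ) < 2⁻¹ by norm_num) (n + 1)]
      have h3 : ((2:ℝ)⁻¹) ^ (n + 1) ≤ (2⁻¹ : ℝ) ^ n :=
        pow_le_pow_of_le_one (by norm_num) (by norm_num) (by omega)
      have h4 : amp l * a1h ([] : List E) = 0 := by simp [a1h]
      rw [h4] at h1
      have h5 : max (amp l * a1h [((γ, S, n) : E)]) 0 = amp l * a1h [((γ, S, n) : E)] :=
        max_eq_left (mul_nonneg (amp_pos l).le (a1h_nonneg _))
      rw [h5] at h1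
      simp only [List.append_nil] at h1
      calc dist (g S) (pt f l) ≤ amp l * a1h [((γ, S, n) : E)] := h1
        _ ≤ (2⁻¹ : ℝ) ^ (n + 1) := h2
        _ ≤ (2⁻¹ : ℝ) ^ n := h3
        _ < ε := hn

/-! ### iterating -/

lemma CDiter_zero (X : Type*) [TopologicalSpace X] (A : Set X) : CDiter X A 0 = A := by
  simp only [CDiter]
  rw [Ordinal.limitRecOn_zero]

lemma CDiter_succ (X : Type*) [TopologicalSpace X] (A : Set X) (o : Ordinal) :
    CDiter X A (o + 1) = CD X (CDiter X A o) := by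
  simp only [CDiter]
  rw [Ordinal.add_one_eq_succ, Ordinal.limitRecOn_succ]

lemma CDiter_limit (X : Type*) [TopologicalSpace X] (A : Set X) {o : Ordinal}
    (h : Order.IsSuccLimit o) : CDiter X A o = ⋂ (b : Set.Iio o), CDiter X A b.1 := by
  simp only [CDiter]
  rw [Ordinal.limitRecOn_limit _ _ _ _ h]

lemma CDiter_D {α : Ordinal} {f : Ordinal → ℕ} (hf : Set.InjOn f (Set.Iic α)) :
    ∀ γ, CDiter Xsp (D f α 0) γ = D f α γ := by
  intro γ
  induction γ using Ordinal.induction with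
  | h γ IH =>
    rcases Ordinal.zero_or_succ_or_isSuccLimit γ with rfl | ⟨β, rfl⟩ | hlim
    · exact CDiter_zero _ _
    · rw [← Ordinal.add_one_eq_succ, CDiter_succ,
        IH β (by rw [← Ordinal.add_one_eq_succ]; exact Order.lt_succ β), CD_D hf β]
    · rw [CDiter_limit _ _ hlim]
      apply Set.eq_of_subset_of_subset
      · intro x hx
        simp only [Set.mem_iInter] at hx
        obtain ⟨l, hok, hrk0, rfl⟩ : x ∈ D f α 0 := by
          have h0 := hx ⟨0, hlim.pos⟩
          rwa [IH 0 hlim.pos] at h0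
        refine ⟨l, hok, ?_, rfl⟩
        rw [hlim.le_iff_forall_le]
        intro b hb
        have hb' := hx ⟨b, hb⟩
        rw [IH b hb] at hb'
        obtain ⟨m, hokm, hrkm, heq⟩ := hb'
        have hlm : l = m := pt_inj hf hok hokm heq
        rwa [hlm]
      · intro x hx
        apply Set.mem_iInter.2
        rintro ⟨b, hb⟩
        rw [IH b hb]
        exact D_antitone (le_of_lt hb) hx

end CDProof

open CDProof in
theorem linfty_rank_ge_omega1 :
    ∀ α : Ordinal, α < (Cardinal.aleph 1).ord →
      ∃ A : Set (lp (fun _ : ℕ => ℝ) ⊤), IsClosed A ∧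
        CDiter _ A α ≠ ∅ ∧ CDiter _ A (α + 1) = ∅ := by
  intro α hα
  have hcard : α.card ≤ Cardinal.aleph0 := by
    rw [Cardinal.lt_ord, ← Cardinal.succ_aleph0, Order.lt_succ_iff] at hα
    exact hα
  have hsucc : (Order.succ α).card ≤ Cardinal.aleph0 := by
    rw [Ordinal.card_succ]
    calc α.card + 1 ≤ Cardinal.aleph0 + Cardinal.aleph0 :=
          add_le_add hcard Cardinal.one_le_aleph0
      _ = Cardinal.aleph0 := Cardinal.aleph0_add_aleph0
  have hcount : (Set.Iic α).Countable := by
    rw [← Order.Iio_succ α, ← Cardinal.le_aleph0_iff_set_countable, Ordinal.mk_Iio_ordinal]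
    calc Cardinal.lift (Order.succ α).card ≤ Cardinal.lift Cardinal.aleph0 :=
          Cardinal.lift_le.2 hsucc
      _ = Cardinal.aleph0 := Cardinal.lift_aleph0
  obtain ⟨f, hf⟩ := Set.countable_iff_exists_injOn.1 hcount
  refine ⟨D f α 0, closed_D hf 0, ?_, ?_⟩
  · rw [CDiter_D hf α]
    apply Set.nonempty_iff_ne_empty.1
    exact ⟨pt f [], [], trivial, le_refl α, rfl⟩
  · rw [CDiter_D hf (α + 1)]
    rw [Set.eq_empty_iff_forall_notMem]
    rintro x ⟨l, hok, hrk, rfl⟩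
    rw [Ordinal.add_one_eq_succ, Order.succ_le_iff] at hrk
    exact absurd (rk_le α l hok) (not_le.2 hrk)
end

section
/- Let X be a Banach space containing a closed subspace isomorphic to ℓ∞ (for instance, any infinite-dimensional injective Banach space). Then for every countable ordinal α < ω₁ there exists a totally imperfect closed subset A ⊆ X with CD^α(A) ≠ ∅ and CD^{α+1}(A) = ∅; hence the condensation rank of X is at least ω₁. -/
set_option synthInstance.maxHeartbeats 1000000
set_option maxHeartbeats 1000000

noncomputable section
open Set Metric

namespace CDproof

universe u

abbrev E : Type := lp (fun _ : ℕ => ℝ) ⊤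

open scoped Classical

/-- injection of `Iio β` into `ℕ`, injective when `β` is countable -/
def iot (β : Ordinal.{u}) : Ordinal.{u} → ℕ := fun γ =>
  if h : (Set.Iio β).Countable ∧ γ < β then
    (Set.countable_iff_exists_injective.mp h.1).choose ⟨γ, h.2⟩
  else 0

lemma iot_injOn {β : Ordinal.{u}} (h : (Set.Iio β).Countable) :
    Set.InjOn (iot β) (Set.Iio β) := by
  intro a ha b hb hab
  have hf := (Set.countable_iff_exists_injective.mp h).choose_spec
  rw [iot, dif_pos ⟨h, ha⟩, iot, dif_pos ⟨h, hb⟩] at hab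
  exact Subtype.ext_iff.mp (hf hab)

def mcode (β γ : Ordinal.{u}) (n : ℕ) : ℕ := Nat.pair (iot β γ) n + 1

def sc (β γ : Ordinal.{u}) (n : ℕ) : ℝ := (4 : ℝ)⁻¹ ^ mcode β γ n

lemma sc_pos {β γ : Ordinal.{u}} {n : ℕ} : 0 < sc β γ n := pow_pos (by norm_num) _

lemma sc_le_pow {β γ : Ordinal.{u}} {n : ℕ} : sc β γ n ≤ (4 : ℝ)⁻¹ ^ (n + 1) :=
  pow_le_pow_of_le_one (by norm_num) (by norm_num)
    (Nat.succ_le_succ (Nat.right_le_pair _ _))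

lemma sc_le {β γ : Ordinal.{u}} {n : ℕ} : sc β γ n ≤ 4⁻¹ := by
  have := sc_le_pow (β := β) (γ := γ) (n := n)
  calc sc β γ n ≤ (4:ℝ)⁻¹ ^ (n+1) := this
    _ ≤ (4:ℝ)⁻¹ ^ 1 := pow_le_pow_of_le_one (by norm_num) (by norm_num) (Nat.succ_le_succ (Nat.zero_le _))
    _ = 4⁻¹ := pow_one _

lemma sc_le_one {β γ : Ordinal.{u}} {n : ℕ} : sc β γ n ≤ 1 :=
  le_trans sc_le (by norm_num)

/-- the unit "direction vector" for a child with scale-code `m` and label set `S` -/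
def ew (m : ℕ) (S : Set ℕ) : ℕ → ℝ := fun j =>
  if j = 2*m ∨ ∃ k ∈ S, j = 2*k+1 then 1 else 0

lemma abs_ew_le (m S j) : |ew m S j| ≤ 1 := by
  rw [ew]; split <;> simp

lemma ew_marker (m S) : ew m S (2*m) = 1 := by
  rw [ew, if_pos (Or.inl rfl)]

lemma ew_marker_ne {m m' : ℕ} (h : m' ≠ m) (S) : ew m' S (2*m) = 0 := by
  rw [ew, if_neg]; push_neg
  constructor
  · omega
  · intro k hk; omega

lemma ew_odd (m S k) : ew m S (2*k+1) = if k ∈ S then 1 else 0 := by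
  rw [ew]
  by_cases hk : k ∈ S
  · rw [if_pos (Or.inr ⟨k, hk, rfl⟩), if_pos hk]
  · rw [if_neg, if_neg hk]
    push_neg
    exact ⟨by omega, fun k' hk' => by
      by_cases h : k' = k
      · subst h; intro he; exact absurd hk' hk
      · omega⟩

/-- the coordinates (level, within-level index) of the point of a node -/
def ptf : Ordinal.{u} → List (Ordinal.{u} × ℕ × Set ℕ) → ℕ × ℕ → ℝ
  | _, [], _ => 0
  | β, (γ, n, S) :: _, (0, j) => sc β γ n * ew (mcode β γ n) S j
  | β, (γ, n, _) :: l, (i+1, j) => sc β γ n * ptf γ l (i, j)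

def Valid : Ordinal.{u} → List (Ordinal.{u} × ℕ × Set ℕ) → Prop
  | _, [] => True
  | β, (γ, _, _) :: l => γ < β ∧ Valid γ l

def res : Ordinal.{u} → List (Ordinal.{u} × ℕ × Set ℕ) → Ordinal.{u}
  | β, [] => β
  | _, (γ, _, _) :: l => res γ l

def Cprod : Ordinal.{u} → List (Ordinal.{u} × ℕ × Set ℕ) → ℝ
  | _, [] => 1
  | β, (γ, n, _) :: l => sc β γ n * Cprod γ l

lemma Cprod_pos (β : Ordinal.{u}) (l) : 0 < Cprod β l := by
  induction l generalizing β with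
  | nil => exact one_pos
  | cons e l ih =>
    obtain ⟨γ, n, S⟩ := e
    exact mul_pos sc_pos (ih γ)

lemma Cprod_le_one (β : Ordinal.{u}) (l) : Cprod β l ≤ 1 := by
  induction l generalizing β with
  | nil => exact le_of_eq rfl
  | cons e l ih =>
    obtain ⟨γ, n, S⟩ := e
    calc sc β γ n * Cprod γ l ≤ 1 * 1 :=
      mul_le_mul sc_le_one (ih γ) (le_of_lt (Cprod_pos γ l)) zero_le_one
    _ = 1 := one_mul 1

lemma abs_ptf_le (β : Ordinal.{u}) (l) (c : ℕ × ℕ) : |ptf β l c| ≤ 4⁻¹ := by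
  induction l generalizing β c with
  | nil => simp [ptf]
  | cons e l ih =>
    obtain ⟨γ, n, S⟩ := e
    obtain ⟨i, j⟩ := c
    match i with
    | 0 =>
      rw [ptf, abs_mul, abs_of_pos (sc_pos (β := β))]
      calc sc β γ n * |ew (mcode β γ n) S j| ≤ 4⁻¹ * 1 :=
        mul_le_mul sc_le (abs_ew_le _ _ _) (abs_nonneg _) (by norm_num)
      _ = 4⁻¹ := mul_one _
    | i+1 =>
      rw [ptf, abs_mul, abs_of_pos (sc_pos (β := β))]
      calc sc β γ n * |ptf γ l (i, j)| ≤ 4⁻¹ * 4⁻¹ :=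
        mul_le_mul sc_le (ih γ (i, j)) (abs_nonneg _) (by norm_num)
      _ ≤ 4⁻¹ := by norm_num

lemma abs_ptf_le_head (β γ : Ordinal.{u}) (n S l c) :
    |ptf β ((γ, n, S) :: l) c| ≤ sc β γ n := by
  obtain ⟨i, j⟩ := c
  match i with
  | 0 =>
    rw [ptf, abs_mul, abs_of_pos (sc_pos (β := β))]
    calc sc β γ n * |ew (mcode β γ n) S j| ≤ sc β γ n * 1 :=
      mul_le_mul_of_nonneg_left (abs_ew_le _ _ _) (le_of_lt sc_pos)
    _ = sc β γ n := mul_one _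
  | i+1 =>
    rw [ptf, abs_mul, abs_of_pos (sc_pos (β := β))]
    calc sc β γ n * |ptf γ l (i, j)| ≤ sc β γ n * 1 :=
      mul_le_mul_of_nonneg_left (le_trans (abs_ptf_le _ _ _) (by norm_num)) (le_of_lt sc_pos)
    _ = sc β γ n := mul_one _

lemma ptf_marker (β γ : Ordinal.{u}) (n S l) :
    ptf β ((γ, n, S) :: l) (0, 2 * mcode β γ n) = sc β γ n := by
  rw [ptf, ew_marker, mul_one]


lemma ew_nonneg (m S j) : 0 ≤ ew m S j := by
  rw [ew]; split <;> norm_num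

/-- the exact distance between the points of two nodes -/
def Dfun : Ordinal.{u} → List (Ordinal.{u} × ℕ × Set ℕ) →
    List (Ordinal.{u} × ℕ × Set ℕ) → ℝ
  | _, [], [] => 0
  | β, [], (γ, n, _) :: _ => sc β γ n
  | β, (γ, n, _) :: _, [] => sc β γ n
  | β, (γ, n, S) :: l, (γ', n', S') :: l' =>
    if (γ, n, S) = (γ', n', S') then sc β γ n * Dfun γ l l'
    else max (sc β γ n) (sc β γ' n')

lemma Dfun_nonneg (β : Ordinal.{u}) (l l') : 0 ≤ Dfun β l l' := by
  induction l generalizing β l' with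
  | nil =>
    match l' with
    | [] => exact le_of_eq rfl
    | (γ, n, S) :: l' => exact le_of_lt sc_pos
  | cons e l ih =>
    obtain ⟨γ, n, S⟩ := e
    match l' with
    | [] => exact le_of_lt sc_pos
    | (γ', n', S') :: l' =>
      rw [Dfun]
      split
    
      · rename_i h
        injection h with h1 h2; injection h2 with h2 h3
        exact mul_nonneg (le_of_lt sc_pos) (ih γ l')
      · exact le_trans (le_of_lt sc_pos) (le_max_left _ _)

lemma abs_diff_le_max {a b : ℝ} (ha : 0 ≤ a) (hb : 0 ≤ b) : |a - b| ≤ max a b := by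
  rw [abs_sub_le_iff]
  constructor
  · linarith [le_max_left a b]
  · linarith [le_max_right a b]

lemma ptf_diff_le (β : Ordinal.{u}) (l l') (c : ℕ × ℕ) :
    |ptf β l c - ptf β l' c| ≤ Dfun β l l' := by
  induction l generalizing β l' c with
  | nil =>
    match l' with
    | [] => simp [ptf, Dfun]
    | (γ, n, S) :: l' =>
      rw [ptf, zero_sub, abs_neg, Dfun]
      exact abs_ptf_le_head β γ n S l' c
  | cons e l ih =>
    obtain ⟨γ, n, S⟩ := e
    match l' with
    | [] =>
      rw [show ptf β [] c = 0 from rfl, sub_zero, Dfun]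
      exact abs_ptf_le_head β γ n S l c
    | (γ', n', S') :: l' =>
      rw [Dfun]
      split
      · rename_i h
        injection h with h1 h2; injection h2 with h2 h3
        subst h1; subst h2; subst h3
        obtain ⟨i, j⟩ := c
        match i with
        | 0 =>
          rw [ptf, ptf, sub_self, abs_zero]
          exact mul_nonneg (le_of_lt sc_pos) (Dfun_nonneg γ l l')
        | i + 1 =>
          rw [ptf, ptf, ← mul_sub, abs_mul, abs_of_pos (sc_pos (β := β))]
          exact mul_le_mul_of_nonneg_left (ih γ l' (i, j)) (le_of_lt sc_pos)
      · obtain ⟨i, j⟩ := c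
        match i with
        | 0 =>
          rw [ptf, ptf]
          refine (abs_diff_le_max (mul_nonneg sc_pos.le (ew_nonneg _ _ _))
            (mul_nonneg sc_pos.le (ew_nonneg _ _ _))).trans (max_le_max ?_ ?_)
          · calc sc β γ n * ew (mcode β γ n) S j
                ≤ sc β γ n * 1 := mul_le_mul_of_nonneg_left
                  (le_trans (le_abs_self _) (abs_ew_le _ _ _)) sc_pos.le
              _ = sc β γ n := mul_one _
          · calc sc β γ' n' * ew (mcode β γ' n') S' j
                ≤ sc β γ' n' * 1 := mul_le_mul_of_nonneg_left
                  (le_trans (le_abs_self _) (abs_ew_le _ _ _)) sc_pos.le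
              _ = sc β γ' n' := mul_one _
        | i + 1 =>
          rw [ptf, ptf]
          have h1 : |sc β γ n * ptf γ l (i, j)| ≤ sc β γ n * 4⁻¹ := by
            rw [abs_mul, abs_of_pos (sc_pos (β := β))]
            exact mul_le_mul_of_nonneg_left (abs_ptf_le _ _ _) sc_pos.le
          have h2 : |sc β γ' n' * ptf γ' l' (i, j)| ≤ sc β γ' n' * 4⁻¹ := by
            rw [abs_mul, abs_of_pos (sc_pos (β := β))]
            exact mul_le_mul_of_nonneg_left (abs_ptf_le _ _ _) sc_pos.le
          have e1 := abs_le.mp h1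
          have e2 := abs_le.mp h2
          have m1 : sc β γ n ≤ max (sc β γ n) (sc β γ' n') := le_max_left _ _
          have m2 : sc β γ' n' ≤ max (sc β γ n) (sc β γ' n') := le_max_right _ _
          have p1 : (0:ℝ) < sc β γ n := sc_pos
          rw [abs_sub_le_iff]
          constructor <;> linarith [e1.1, e1.2, e2.1, e2.2]


lemma ptf_diff_attained (l : List (Ordinal.{u} × ℕ × Set ℕ)) :
    ∀ (β : Ordinal.{u}) (l' : List (Ordinal.{u} × ℕ × Set ℕ)),
      (Set.Iio β).Countable → Valid β l → Valid β l' →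
      ∃ c : ℕ × ℕ, |ptf β l c - ptf β l' c| = Dfun β l l' := by
  induction l with
  | nil =>
    intro β l' hβ hl hl'
    match l' with
    | [] => exact ⟨(0, 0), by simp [ptf, Dfun]⟩
    | (γ, n, S) :: l' =>
      refine ⟨(0, 2 * mcode β γ n), ?_⟩
      rw [show ptf β [] (0, 2 * mcode β γ n) = 0 from rfl, ptf_marker, zero_sub,
        abs_neg, abs_of_pos sc_pos, Dfun]
  | cons e l ih =>
    intro β l' hβ hl hl'
    obtain ⟨γ, n, S⟩ := e
    match l' with
    | [] =>
      refine ⟨(0, 2 * mcode β γ n), ?_⟩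
      rw [ptf_marker, show ptf β [] (0, 2 * mcode β γ n) = 0 from rfl, sub_zero,
        abs_of_pos sc_pos, Dfun]
    | (γ', n', S') :: l' =>
      by_cases he : ((γ : Ordinal.{u}), n, S) = (γ', n', S')
      · have h1 : γ = γ' := congrArg Prod.fst he
        have h2 : n = n' := congrArg (fun p => p.2.1) he
        have h3 : S = S' := congrArg (fun p => p.2.2) he
        subst h1; subst h2; subst h3
        have hγβ : γ < β := hl.1
        have hγc : (Set.Iio γ).Countable :=
          hβ.mono (fun x hx => lt_trans hx hγβ)
        obtain ⟨⟨i, j⟩, hc⟩ := ih γ l' hγc hl.2 hl'.2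
        refine ⟨(i + 1, j), ?_⟩
        rw [ptf, ptf, ← mul_sub, abs_mul, abs_of_pos (sc_pos (β := β)), hc,
          Dfun, if_pos rfl]
      · rw [Dfun, if_neg he]
        by_cases hm : mcode β γ n = mcode β γ' n'
        · have hp := Nat.pair_eq_pair.mp (Nat.add_right_cancel hm)
          have hγ : γ = γ' :=
            iot_injOn hβ (Set.mem_Iio.mpr hl.1) (Set.mem_Iio.mpr hl'.1) hp.1
          have hn : n = n' := hp.2
          subst hγ; subst hn
          have hS : S ≠ S' := fun h => he (by rw [h])
          obtain ⟨k, hk⟩ : ∃ k, ¬(k ∈ S ↔ k ∈ S') := by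
            by_contra hco
            push_neg at hco
            exact hS (Set.ext fun k => hco k)
          refine ⟨(0, 2 * k + 1), ?_⟩
          rw [ptf, ptf, ew_odd, ew_odd, max_self]
          by_cases hk1 : k ∈ S <;> by_cases hk2 : k ∈ S'
          · exact absurd (iff_of_true hk1 hk2) hk
          · rw [if_pos hk1, if_neg hk2, mul_one, mul_zero, sub_zero,
              abs_of_pos sc_pos]
          · rw [if_neg hk1, if_pos hk2, mul_zero, mul_one, zero_sub, abs_neg,
              abs_of_pos sc_pos]
          · exact absurd (iff_of_false hk1 hk2) hk
        · rcases le_or_gt (sc β γ' n') (sc β γ n) with hle | hlt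
          · refine ⟨(0, 2 * mcode β γ n), ?_⟩
            rw [ptf_marker, ptf, ew_marker_ne (Ne.symm hm), mul_zero, sub_zero,
              abs_of_pos sc_pos, max_eq_left hle]
          · refine ⟨(0, 2 * mcode β γ' n'), ?_⟩
            rw [ptf_marker, ptf, ew_marker_ne hm, mul_zero, zero_sub, abs_neg,
              abs_of_pos sc_pos, max_eq_right hlt.le]

/-- the point in `ℓ∞` associated to a node of the tree -/
def nodePt (β : Ordinal.{u}) (l : List (Ordinal.{u} × ℕ × Set ℕ)) : E :=
  ⟨fun k => ptf β l k.unpair, memℓp_infty ⟨(4:ℝ)⁻¹, by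
    rintro x ⟨k, rfl⟩
    dsimp only
    rw [Real.norm_eq_abs]
    exact abs_ptf_le β l _⟩⟩

lemma dist_nodePt {β : Ordinal.{u}} (hβ : (Set.Iio β).Countable) {l l'}
    (hl : Valid β l) (hl' : Valid β l') :
    dist (nodePt β l) (nodePt β l') = Dfun β l l' := by
  rw [dist_eq_norm]
  apply le_antisymm
  · apply lp.norm_le_of_forall_le (Dfun_nonneg β l l')
    intro k
    have hk : (↑(nodePt β l - nodePt β l') : ℕ → ℝ) k
        = ptf β l k.unpair - ptf β l' k.unpair := rfl
    rw [hk, Real.norm_eq_abs]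
    exact ptf_diff_le β l l' _
  · obtain ⟨c, hc⟩ := ptf_diff_attained l β l' hβ hl hl'
    have h2 : (↑(nodePt β l - nodePt β l') : ℕ → ℝ) (Nat.pair c.1 c.2)
        = ptf β l c - ptf β l' c := by
      show ptf β l (Nat.unpair (Nat.pair c.1 c.2)) - ptf β l' (Nat.unpair (Nat.pair c.1 c.2)) = _
      rw [Nat.unpair_pair]
    calc Dfun β l l' = |ptf β l c - ptf β l' c| := hc.symm
      _ = ‖(↑(nodePt β l - nodePt β l') : ℕ → ℝ) (Nat.pair c.1 c.2)‖ := by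
          rw [h2, Real.norm_eq_abs]
      _ ≤ ‖nodePt β l - nodePt β l'‖ := lp.norm_apply_le_norm ENNReal.top_ne_zero _ _


lemma Dfun_pos (β : Ordinal.{u}) (l l') (h : l ≠ l') : 0 < Dfun β l l' := by
  induction l generalizing β l' with
  | nil =>
    match l' with
    | [] => exact absurd rfl h
    | (γ, n, S) :: l' => exact sc_pos
  | cons e l ih =>
    obtain ⟨γ, n, S⟩ := e
    match l' with
    | [] => exact sc_pos
    | (γ', n', S') :: l' =>
      rw [Dfun]
      split
      · rename_i he
        have h1 : γ = γ' := congrArg Prod.fst he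
        have h2 : n = n' := congrArg (fun p => p.2.1) he
        have h3 : S = S' := congrArg (fun p => p.2.2) he
        subst h1; subst h2; subst h3
        exact mul_pos sc_pos (ih γ l' (fun hll => h (by rw [hll])))
      · exact lt_of_lt_of_le sc_pos (le_max_left _ _)

lemma nodePt_inj {β : Ordinal.{u}} (hβ : (Set.Iio β).Countable) {l l'}
    (hl : Valid β l) (hl' : Valid β l') (h : nodePt β l = nodePt β l') : l = l' := by
  by_contra hne
  have hd : dist (nodePt β l) (nodePt β l') = 0 := by rw [h, dist_self]
  rw [dist_nodePt hβ hl hl'] at hd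
  exact absurd hd (ne_of_gt (Dfun_pos β l l' hne))

lemma Cprod_le_sc (β γ : Ordinal.{u}) (n S l) :
    Cprod β ((γ, n, S) :: l) ≤ sc β γ n := by
  rw [Cprod]
  calc sc β γ n * Cprod γ l ≤ sc β γ n * 1 :=
        mul_le_mul_of_nonneg_left (Cprod_le_one γ l) sc_pos.le
    _ = sc β γ n := mul_one _

lemma Dfun_ge_of_not_prefix (β : Ordinal.{u}) (l l') (h : ¬ l <+: l') :
    Cprod β l ≤ Dfun β l l' := by
  induction l generalizing β l' with
  | nil => exact absurd (List.nil_prefix) h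
  | cons e l ih =>
    obtain ⟨γ, n, S⟩ := e
    match l' with
    | [] => rw [Dfun]; exact Cprod_le_sc β γ n S l
    | (γ', n', S') :: l' =>
      rw [Dfun]
      split
      · rename_i he
        have h1 : γ = γ' := congrArg Prod.fst he
        have h2 : n = n' := congrArg (fun p => p.2.1) he
        have h3 : S = S' := congrArg (fun p => p.2.2) he
        subst h1; subst h2; subst h3
        have hnp : ¬ l <+: l' := fun hp => h (List.cons_prefix_cons.mpr ⟨rfl, hp⟩)
        rw [Cprod]
        exact mul_le_mul_of_nonneg_left (ih γ l' hnp) sc_pos.le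
      · exact le_trans (Cprod_le_sc β γ n S l) (le_max_left _ _)

lemma res_le {β : Ordinal.{u}} {l} (hl : Valid β l) : res β l ≤ β := by
  induction l generalizing β with
  | nil => exact le_refl β
  | cons e l ih =>
    obtain ⟨γ, n, S⟩ := e
    exact le_of_lt (lt_of_le_of_lt (ih hl.2) hl.1)

lemma res_lt_of_prefix {β : Ordinal.{u}} {l l'} (hl' : Valid β l')
    (hp : l <+: l') (hne : l ≠ l') : res β l' < res β l := by
  induction l generalizing β l' with
  | nil =>
    match l' with
    | [] => exact absurd rfl hne
    | (γ, n, S) :: l' =>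
      show res γ l' < β
      exact lt_of_le_of_lt (res_le hl'.2) hl'.1
  | cons e l ih =>
    obtain ⟨γ, n, S⟩ := e
    match l' with
    | [] => exact absurd hp (by simp)
    | (γ', n', S') :: l'' =>
      obtain ⟨he, hp'⟩ := List.cons_prefix_cons.mp hp
      have h1 : γ = γ' := congrArg Prod.fst he
      have h2 : n = n' := congrArg (fun p => p.2.1) he
      have h3 : S = S' := congrArg (fun p => p.2.2) he
      subst h1; subst h2; subst h3
      exact ih hl'.2 hp' (fun hll => hne (by rw [hll]))

lemma res_append (β γ : Ordinal.{u}) (n S l) :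
    res β (l ++ [(γ, n, S)]) = γ := by
  induction l generalizing β with
  | nil => rfl
  | cons e l ih =>
    obtain ⟨δ, m, T⟩ := e
    exact ih δ

lemma valid_append {β γ : Ordinal.{u}} {l} (hl : Valid β l) (hγ : γ < res β l) (n S) :
    Valid β (l ++ [(γ, n, S)]) := by
  induction l generalizing β with
  | nil => exact ⟨hγ, trivial⟩
  | cons e l ih =>
    obtain ⟨δ, m, T⟩ := e
    exact ⟨hl.1, ih hl.2 hγ⟩

lemma Dfun_append (β : Ordinal.{u}) (l) (γ n S) :
    Dfun β l (l ++ [(γ, n, S)]) = Cprod β l * sc (res β l) γ n := by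
  induction l generalizing β with
  | nil => rw [show ([] : List (Ordinal.{u} × ℕ × Set ℕ)) ++ [(γ,n,S)] = [(γ,n,S)] from rfl,
      Dfun, Cprod, res, one_mul]
  | cons e l ih =>
    obtain ⟨δ, m, T⟩ := e
    show Dfun β ((δ,m,T) :: l) ((δ,m,T) :: (l ++ [(γ,n,S)])) = _
    rw [Dfun, if_pos rfl, ih δ, Cprod, res, mul_assoc]


/-- shift all levels of the tree coordinates up by one -/
def shiftF (x : E) : E :=
  ⟨fun k => if (Nat.unpair k).1 = 0 then 0
    else x (Nat.pair ((Nat.unpair k).1 - 1) (Nat.unpair k).2),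
  memℓp_infty ⟨‖x‖, by
    rintro r ⟨k, rfl⟩
    dsimp only
    split
    · rw [norm_zero]; exact norm_nonneg x
    · exact lp.norm_apply_le_norm ENNReal.top_ne_zero x _⟩⟩

lemma shiftF_sub (x y : E) : shiftF x - shiftF y = shiftF (x - y) := by
  apply lp.ext
  funext k
  rw [lp.coeFn_sub, Pi.sub_apply]
  show (if (Nat.unpair k).1 = 0 then (0:ℝ) else x _) -
      (if (Nat.unpair k).1 = 0 then (0:ℝ) else y _) =
      (if (Nat.unpair k).1 = 0 then (0:ℝ) else (x - y) _)
  split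
  · rw [sub_zero]
  · rw [lp.coeFn_sub, Pi.sub_apply]

lemma norm_shiftF (x : E) : ‖shiftF x‖ = ‖x‖ := by
  apply le_antisymm
  · apply lp.norm_le_of_forall_le (norm_nonneg x)
    intro k
    show ‖if (Nat.unpair k).1 = 0 then (0:ℝ) else x _‖ ≤ ‖x‖
    split
    · rw [norm_zero]; exact norm_nonneg x
    · exact lp.norm_apply_le_norm ENNReal.top_ne_zero x _
  · apply lp.norm_le_of_forall_le (norm_nonneg (shiftF x))
    intro k
    have h1 : (shiftF x : ℕ → ℝ) (Nat.pair ((Nat.unpair k).1 + 1) (Nat.unpair k).2)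
        = x k := by
      show (if (Nat.unpair (Nat.pair ((Nat.unpair k).1 + 1) (Nat.unpair k).2)).1 = 0
        then (0:ℝ) else x _) = x k
      rw [Nat.unpair_pair]
      dsimp only
      rw [if_neg (Nat.succ_ne_zero _)]
      rw [Nat.add_sub_cancel, Nat.pair_unpair]
    calc ‖x k‖ = ‖(shiftF x : ℕ → ℝ) (Nat.pair ((Nat.unpair k).1 + 1) (Nat.unpair k).2)‖ := by
          rw [h1]
      _ ≤ ‖shiftF x‖ := lp.norm_apply_le_norm ENNReal.top_ne_zero _ _

/-- the similarity of `ℓ∞` mapping the tree for `γ` onto the subtree above the child `(γ,n,S)` -/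
def Phi (α γ : Ordinal.{u}) (n : ℕ) (S : Set ℕ) (x : E) : E :=
  nodePt α [(γ, n, S)] + sc α γ n • shiftF x

lemma Phi_nodePt (α γ : Ordinal.{u}) (n S l) :
    Phi α γ n S (nodePt γ l) = nodePt α ((γ, n, S) :: l) := by
  apply lp.ext
  funext k
  rw [Phi, lp.coeFn_add, Pi.add_apply, lp.coeFn_smul, Pi.smul_apply, smul_eq_mul]
  show ptf α [(γ,n,S)] k.unpair +
      sc α γ n * (if (Nat.unpair k).1 = 0 then (0:ℝ)
        else ptf γ l (Nat.unpair (Nat.pair ((Nat.unpair k).1 - 1) (Nat.unpair k).2)))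
      = ptf α ((γ,n,S) :: l) k.unpair
  rcases hu : Nat.unpair k with ⟨i, j⟩
  dsimp only
  rcases i with _ | i
  · rw [if_pos rfl, mul_zero, add_zero, ptf, ptf]
  · rw [if_neg (Nat.succ_ne_zero _), Nat.add_sub_cancel, Nat.unpair_pair]
    show ptf α [(γ,n,S)] (i+1, j) + sc α γ n * ptf γ l (i, j)
      = ptf α ((γ,n,S) :: l) (i+1, j)
    simp [ptf]

lemma dist_Phi (α γ : Ordinal.{u}) (n S x y) :
    dist (Phi α γ n S x) (Phi α γ n S y) = sc α γ n * dist x y := by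
  rw [dist_eq_norm, dist_eq_norm, Phi, Phi, add_sub_add_left_eq_sub, ← smul_sub,
    norm_smul, Real.norm_eq_abs, abs_of_pos sc_pos, shiftF_sub, norm_shiftF]


lemma Phi_lipschitz (α γ : Ordinal.{u}) (n S) :
    LipschitzWith (Real.toNNReal (sc α γ n)) (Phi α γ n S) := by
  apply LipschitzWith.of_dist_le_mul
  intro x y
  rw [dist_Phi, Real.coe_toNNReal _ sc_pos.le]

lemma Phi_image_closed (α γ : Ordinal.{u}) (n S) {C : Set E} (hC : IsClosed C) :
    IsClosed (Phi α γ n S '' C) := by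
  apply IsSeqClosed.isClosed
  intro x p hx hp
  choose c hc hPc using hx
  have hxeq : (fun m => Phi α γ n S (c m)) = x := funext hPc
  have hcauchy : CauchySeq (fun m => Phi α γ n S (c m)) := by
    rw [hxeq]; exact hp.cauchySeq
  have hcc : CauchySeq c := by
    rw [Metric.cauchySeq_iff] at hcauchy ⊢
    intro ε hε
    obtain ⟨N, hN⟩ := hcauchy (sc α γ n * ε) (mul_pos sc_pos hε)
    refine ⟨N, fun a ha b hb => ?_⟩
    have h2 := hN a ha b hb
    rw [dist_Phi] at h2
    exact lt_of_mul_lt_mul_left h2 sc_pos.le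
  obtain ⟨y, hy⟩ := cauchySeq_tendsto_of_complete hcc
  have hyC : y ∈ C := hC.mem_of_tendsto hy (Filter.Eventually.of_forall hc)
  have ht : Filter.Tendsto (fun m => Phi α γ n S (c m)) Filter.atTop
      (nhds (Phi α γ n S y)) :=
    ((Phi_lipschitz α γ n S).continuous.tendsto _).comp hy
  rw [hxeq] at ht
  exact ⟨y, hyC, tendsto_nhds_unique ht hp⟩

/-- the set of nodes of the tree for `α` whose residual rank is at least `β` -/
def NS (α β : Ordinal.{u}) : Set E :=
  {x | ∃ l, Valid α l ∧ β ≤ res α l ∧ nodePt α l = x}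

lemma NS_closed : ∀ (α : Ordinal.{u}), (Set.Iio α).Countable →
    ∀ β, IsClosed (NS α β) := by
  intro α
  induction α using Ordinal.induction with
  | _ α IH =>
    intro hα β
    rw [← isOpen_compl_iff, Metric.isOpen_iff]
    intro z hz
    by_cases hβα : β ≤ α
    · have hroot : nodePt α [] ∈ NS α β := ⟨[], trivial, hβα, rfl⟩
      have hzr : z ≠ nodePt α [] := fun h => hz (h ▸ hroot)
      have hd : 0 < dist z (nodePt α []) := dist_pos.mpr hzr
      set d := dist z (nodePt α []) with hdd
      by_cases hex : ∃ q, q ∈ Metric.ball z (d/4) ∧ q ∈ NS α β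
      · obtain ⟨q, hqb, ⟨l, hlv, hlres, rfl⟩⟩ := hex
        rcases l with _ | ⟨⟨γ, n, S⟩, r⟩
        · exfalso
          rw [Metric.mem_ball, dist_comm, ← hdd] at hqb
          linarith
        · have hγα : γ < α := hlv.1
          have hγc : (Set.Iio γ).Countable :=
            hα.mono (fun x hx => lt_trans hx hγα)
          have hKclosed : IsClosed (Phi α γ n S '' NS γ β) :=
            Phi_image_closed α γ n S (IH γ hγα hγc β)
          have hzK : z ∈ (Phi α γ n S '' NS γ β)ᶜ := by
            rintro ⟨y, ⟨r', hr'v, hr'res, rfl⟩, rfl⟩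
            rw [Phi_nodePt] at hz
            exact hz ⟨(γ, n, S) :: r', ⟨hγα, hr'v⟩, hr'res, rfl⟩
          obtain ⟨ε', hε', hball'⟩ :=
            Metric.isOpen_iff.mp hKclosed.isOpen_compl z hzK
          refine ⟨min (d/4) ε', lt_min (by linarith) hε', fun w hw => ?_⟩
          rw [Metric.mem_ball] at hw
          intro hwNS
          obtain ⟨l', hl'v, hl'res, rfl⟩ := hwNS
          rcases l' with _ | ⟨⟨γ', n', S'⟩, r'⟩
          · have : dist z (nodePt α []) < d/4 := by
              rw [dist_comm]
              exact lt_of_lt_of_le hw (le_trans (min_le_left _ _) (le_refl _))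
            rw [← hdd] at this; linarith
          · -- show heads are equal
            have hq : dist z (nodePt α ((γ, n, S) :: r)) < d/4 := by
              rw [Metric.mem_ball] at hqb; rw [dist_comm]; exact hqb
            have hwz : dist z (nodePt α ((γ', n', S') :: r')) < d/4 := by
              rw [dist_comm]; exact lt_of_lt_of_le hw (min_le_left _ _)
            have hsc1 : (3/4) * d < sc α γ n := by
              have h1 : dist (nodePt α []) (nodePt α ((γ, n, S) :: r)) = sc α γ n := by
                rw [dist_nodePt hα (show Valid α [] from trivial) hlv]; rfl
              have h2 := dist_triangle (nodePt α []) (nodePt α ((γ, n, S) :: r)) z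
              rw [h1, dist_comm (nodePt α ((γ, n, S) :: r)) z,
                dist_comm (nodePt α []) z, ← hdd] at h2
              linarith
            have hsc2 : (3/4) * d < sc α γ' n' := by
              have h1 : dist (nodePt α []) (nodePt α ((γ', n', S') :: r')) = sc α γ' n' := by
                rw [dist_nodePt hα (show Valid α [] from trivial) hl'v]; rfl
              have h2 := dist_triangle (nodePt α []) (nodePt α ((γ', n', S') :: r')) z
              rw [h1, dist_comm (nodePt α ((γ', n', S') :: r')) z,
                dist_comm (nodePt α []) z, ← hdd] at h2
              linarith
            have hhead : ((γ : Ordinal.{u}), n, S) = (γ', n', S') := by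
              by_contra hne
              have hqw : dist (nodePt α ((γ, n, S) :: r)) (nodePt α ((γ', n', S') :: r'))
                  = max (sc α γ n) (sc α γ' n') := by
                rw [dist_nodePt hα hlv hl'v, Dfun, if_neg hne]
              have h3 := dist_triangle (nodePt α ((γ, n, S) :: r)) z
                (nodePt α ((γ', n', S') :: r'))
              rw [hqw, dist_comm _ z] at h3
              have h4 : max (sc α γ n) (sc α γ' n') < d/2 := by linarith
              have h5 : sc α γ n ≤ max (sc α γ n) (sc α γ' n') := le_max_left _ _
              linarith
            have h1 : γ = γ' := congrArg Prod.fst hhead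
            have h2 : n = n' := congrArg (fun p => p.2.1) hhead
            have h3 : S = S' := congrArg (fun p => p.2.2) hhead
            subst h1; subst h2; subst h3
            have hwK : nodePt α ((γ, n, S) :: r') ∈ Phi α γ n S '' NS γ β := by
              refine ⟨nodePt γ r', ⟨r', hl'v.2, hl'res, rfl⟩, ?_⟩
              rw [Phi_nodePt]
            exact hball' (lt_of_lt_of_le hw (min_le_right _ _) :
              nodePt α ((γ, n, S) :: r') ∈ Metric.ball z ε') hwK
      · refine ⟨d/4, by linarith, fun w hw hwNS => hex ⟨w, hw, hwNS⟩⟩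
    · refine ⟨1, one_pos, fun w _ => ?_⟩
      rintro ⟨l, hl, hres, rfl⟩
      exact hβα (le_trans hres (res_le hl))


lemma uncountable_of_setNat_inj {f : Set ℕ → E} (hf : Function.Injective f)
    {U : Set E} (hr : Set.range f ⊆ U) : ¬ U.Countable := by
  intro hc
  have h1 : (Set.range f).Countable := hc.mono hr
  haveI := h1.to_subtype
  have h2 : Countable (Set ℕ) :=
    Countable.of_equiv _ (Equiv.ofInjective f hf).symm
  haveI := h2
  obtain ⟨g, hg⟩ := exists_injective_nat (Set ℕ)
  exact Function.cantor_injective g hg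
  
lemma CD_NS (α : Ordinal.{u}) (hα : (Set.Iio α).Countable) (β : Ordinal.{u}) :
    CD E (NS α β) = NS α (β + 1) := by
  apply Set.Subset.antisymm
  · intro p hp
    have hcl : p ∈ closure (NS α β) := by
      rw [mem_closure_iff_nhds]
      intro U hU
      by_contra hne
      rw [Set.not_nonempty_iff_eq_empty] at hne
      exact hp U hU (hne ▸ Set.countable_empty)
    rw [(NS_closed α hα β).closure_eq] at hcl
    obtain ⟨l, hlv, hlres, rfl⟩ := hcl
    refine ⟨l, hlv, ?_, rfl⟩
    rw [Ordinal.add_one_eq_succ, Order.succ_le_iff]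
    by_contra hle
    push_neg at hle
    apply hp (Metric.ball (nodePt α l) (Cprod α l))
      (Metric.ball_mem_nhds _ (Cprod_pos α l))
    apply Set.Countable.mono ?_ (Set.countable_singleton (nodePt α l))
    rintro w ⟨hwb, ⟨l', hl'v, hl'res, rfl⟩⟩
    have hpre : l <+: l' := by
      by_contra hnp
      have h1 := Dfun_ge_of_not_prefix α l l' hnp
      rw [← dist_nodePt hα hlv hl'v] at h1
      rw [Metric.mem_ball, dist_comm] at hwb
      linarith
    by_cases heq : l = l'
    · subst heq; exact Set.mem_singleton _
    · exfalso
      have h2 := res_lt_of_prefix hl'v hpre heq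
      exact absurd (lt_of_le_of_lt hl'res (lt_of_lt_of_le h2 hle)) (lt_irrefl β)
  · rintro p ⟨l, hlv, hlres, rfl⟩
    intro U hU
    obtain ⟨ε, hε, hball⟩ := Metric.mem_nhds_iff.mp hU
    obtain ⟨n, hn⟩ := exists_pow_lt_of_lt_one hε (by norm_num : (4:ℝ)⁻¹ < 1)
    have hβres : β < res α l := by
      rw [Ordinal.add_one_eq_succ, Order.succ_le_iff] at hlres
      exact hlres
    have hinj : Function.Injective (fun S : Set ℕ => nodePt α (l ++ [(β, n, S)])) := by
      intro S S' hSS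
      have h1 := nodePt_inj hα (valid_append hlv hβres n S)
        (valid_append hlv hβres n S') hSS
      have h2 : [((β : Ordinal.{u}), n, S)] = [(β, n, S')] :=
        List.append_cancel_left h1
      have h3 : ((β : Ordinal.{u}), n, S) = (β, n, S') := by
        injection h2
      exact congrArg (fun p => p.2.2) h3
    apply uncountable_of_setNat_inj hinj
    rintro w ⟨S, rfl⟩
    refine ⟨hball ?_, ⟨l ++ [(β, n, S)], valid_append hlv hβres n S,
      le_of_eq (res_append α β n S l).symm, rfl⟩⟩
    show dist (nodePt α (l ++ [(β, n, S)])) (nodePt α l) < ε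
    rw [dist_comm, dist_nodePt hα hlv (valid_append hlv hβres n S), Dfun_append]
    calc Cprod α l * sc (res α l) β n ≤ 1 * sc (res α l) β n :=
          mul_le_mul_of_nonneg_right (Cprod_le_one _ _) sc_pos.le
      _ = sc (res α l) β n := one_mul _
      _ ≤ (4:ℝ)⁻¹ ^ (n+1) := sc_le_pow
      _ ≤ (4:ℝ)⁻¹ ^ n := pow_le_pow_of_le_one (by norm_num) (by norm_num) (Nat.le_succ n)
      _ < ε := hn


lemma NS_antitone (α : Ordinal.{u}) {β β' : Ordinal.{u}} (h : β ≤ β') :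
    NS α β' ⊆ NS α β :=
  fun _ ⟨l, hv, hr, he⟩ => ⟨l, hv, le_trans h hr, he⟩

lemma NS_limit (α : Ordinal.{u}) (hα : (Set.Iio α).Countable) (o : Ordinal.{u})
    (ho : Order.IsSuccLimit o) : ⋂ (b : Set.Iio o), NS α b.1 = NS α o := by
  apply Set.Subset.antisymm
  · intro x hx
    have h0 : x ∈ NS α 0 := by
      have h1 := Set.mem_iInter.mp hx ⟨0, ho.pos⟩
      exact NS_antitone α zero_le h1
    obtain ⟨l, hv, _, rfl⟩ := h0
    refine ⟨l, hv, ?_, rfl⟩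
    by_contra hlt
    push_neg at hlt
    have hsucc : res α l + 1 < o := by
      rw [Ordinal.add_one_eq_succ]
      exact ho.succ_lt hlt
    obtain ⟨l', hv', hr', he'⟩ := Set.mem_iInter.mp hx ⟨res α l + 1, hsucc⟩
    have heq : l' = l := nodePt_inj hα hv' hv he'
    subst heq
    have hr2 : res α l' + 1 ≤ res α l' := hr'
    rw [Ordinal.add_one_eq_succ, Order.succ_le_iff] at hr2
    exact lt_irrefl _ hr2
  · intro x hx
    apply Set.mem_iInter.mpr
    rintro ⟨b, hb⟩
    exact NS_antitone α (le_of_lt hb) hx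

lemma CDiter_zero' (X : Type*) [TopologicalSpace X] (A : Set X) :
    CDiter X A 0 = A := by
  unfold CDiter
  rw [Ordinal.limitRecOn_zero]

lemma CDiter_succ' (X : Type*) [TopologicalSpace X] (A : Set X) (o : Ordinal) :
    CDiter X A (Order.succ o) = CD X (CDiter X A o) := by
  unfold CDiter
  rw [Ordinal.limitRecOn_succ]

lemma CDiter_limit' (X : Type*) [TopologicalSpace X] (A : Set X) {o : Ordinal}
    (ho : Order.IsSuccLimit o) : CDiter X A o = ⋂ (b : Set.Iio o), CDiter X A b.1 := by
  unfold CDiter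
  rw [Ordinal.limitRecOn_limit _ _ _ _ ho]

lemma CDiter_NS (α : Ordinal.{u}) (hα : (Set.Iio α).Countable) :
    ∀ o : Ordinal.{u}, CDiter E (NS α 0) o = NS α o := by
  intro o
  induction o using Ordinal.induction with
  | _ o IH =>
    rcases Ordinal.zero_or_succ_or_isSuccLimit o with h0 | ⟨a, ha⟩ | hl
    · subst h0
      exact CDiter_zero' E (NS α 0)
    · subst ha
      rw [CDiter_succ', IH a (Order.lt_succ a), CD_NS α hα a,
        Ordinal.add_one_eq_succ]
    · rw [CDiter_limit' E (NS α 0) hl, ← NS_limit α hα o hl]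
      apply Set.iInter_congr
      rintro ⟨b, hb⟩
      exact IH b hb

lemma NS_top (α : Ordinal.{u}) : nodePt α [] ∈ NS α α :=
  ⟨[], trivial, le_refl α, rfl⟩

lemma NS_above (α : Ordinal.{u}) : NS α (α + 1) = ∅ := by
  rw [Set.eq_empty_iff_forall_notMem]
  rintro x ⟨l, hv, hr, rfl⟩
  rw [Ordinal.add_one_eq_succ, Order.succ_le_iff] at hr
  exact absurd (res_le hv) (not_le.mpr hr)

lemma NS_totallyImperfect (α : Ordinal.{u}) (hα : (Set.Iio α).Countable) :
    ∀ P ⊆ NS α 0, Perfect P → P = ∅ := by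
  intro P hPA hP
  by_contra hne
  obtain ⟨x, hx⟩ := Set.nonempty_iff_ne_empty.mpr hne
  set T : Set Ordinal.{u} := {o | ∃ l, Valid α l ∧ nodePt α l ∈ P ∧ res α l = o}
    with hT
  have hTne : T.Nonempty := by
    obtain ⟨l, hv, _, he⟩ := hPA hx
    exact ⟨res α l, l, hv, he ▸ hx, rfl⟩
  obtain ⟨l₀, hv₀, hx₀, hres₀⟩ := Ordinal.lt_wf.min_mem T hTne
  have hacc := accPt_iff_nhds.mp (hP.acc _ hx₀)
  obtain ⟨y, ⟨hyb, hyP⟩, hyne⟩ := hacc (Metric.ball (nodePt α l₀) (Cprod α l₀))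
    (Metric.ball_mem_nhds _ (Cprod_pos α l₀))
  obtain ⟨l', hv', _, rfl⟩ := hPA hyP
  have hpre : l₀ <+: l' := by
    by_contra hnp
    have h1 := Dfun_ge_of_not_prefix α l₀ l' hnp
    rw [← dist_nodePt hα hv₀ hv'] at h1
    rw [Metric.mem_ball, dist_comm] at hyb
    linarith
  have hne2 : l₀ ≠ l' := fun h => hyne (congrArg (nodePt α) h.symm)
  have h2 := res_lt_of_prefix hv' hpre hne2
  rw [hres₀] at h2
  exact Ordinal.lt_wf.not_lt_min T ⟨l', hv', hyP, rfl⟩ h2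


section Transfer

variable {Y X : Type*} [TopologicalSpace Y] [TopologicalSpace X]

lemma CD_image {e : Y → X} (he : Topology.IsClosedEmbedding e) (A : Set Y) :
    CD X (e '' A) = e '' CD Y A := by
  apply Set.Subset.antisymm
  · intro p hp
    have hcl : p ∈ closure (e '' A) := by
      rw [mem_closure_iff_nhds]
      intro U hU
      by_contra hne
      rw [Set.not_nonempty_iff_eq_empty] at hne
      exact hp U hU (hne ▸ Set.countable_empty)
    rw [he.closure_image_eq] at hcl
    obtain ⟨q, hq, rfl⟩ := hcl
    refine ⟨q, ?_, rfl⟩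
    intro V hV
    rw [he.isEmbedding.isInducing.nhds_eq_comap q, Filter.mem_comap] at hV
    obtain ⟨U, hU, hUV⟩ := hV
    intro hcV
    apply hp U hU
    have hsub : U ∩ e '' A ⊆ e '' (V ∩ A) := by
      rintro y ⟨hyU, a, haA, rfl⟩
      exact ⟨a, ⟨hUV (Set.mem_preimage.mpr hyU), haA⟩, rfl⟩
    exact Set.Countable.mono hsub (hcV.image e)
  · rintro p ⟨q, hq, rfl⟩
    intro U hU
    have hV : e ⁻¹' U ∈ nhds q := he.continuous.continuousAt.preimage_mem_nhds hU
    intro hcU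
    apply hq _ hV
    have hsub : e ⁻¹' U ∩ A ⊆ e ⁻¹' (U ∩ e '' A) := by
      rintro a ⟨haU, haA⟩
      exact ⟨haU, a, haA, rfl⟩
    exact Set.Countable.mono hsub (hcU.preimage he.injective)

lemma CDiter_image {e : Y → X} (he : Topology.IsClosedEmbedding e) (A : Set Y) :
    ∀ o : Ordinal.{u}, CDiter X (e '' A) o = e '' CDiter Y A o := by
  intro o
  induction o using Ordinal.induction with
  | _ o IH =>
    rcases Ordinal.zero_or_succ_or_isSuccLimit o with h0 | ⟨a, ha⟩ | hl
    · subst h0; rw [CDiter_zero', CDiter_zero']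
    · subst ha
      rw [CDiter_succ', CDiter_succ', IH a (Order.lt_succ a), CD_image he]
    · rw [CDiter_limit' _ _ hl, CDiter_limit' _ _ hl]
      apply Set.Subset.antisymm
      · intro x hx
        have h1 := Set.mem_iInter.mp hx ⟨0, hl.pos⟩
        rw [IH 0 hl.pos] at h1
        obtain ⟨y, hy, rfl⟩ := h1
        refine ⟨y, Set.mem_iInter.mpr ?_, rfl⟩
        rintro ⟨b, hb⟩
        have h2 := Set.mem_iInter.mp hx ⟨b, hb⟩
        rw [IH b hb] at h2
        obtain ⟨y', hy', hee⟩ := h2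
        exact (he.injective hee) ▸ hy'
      · rintro x ⟨y, hy, rfl⟩
        apply Set.mem_iInter.mpr
        rintro ⟨b, hb⟩
        rw [IH b hb]
        exact ⟨y, Set.mem_iInter.mp hy ⟨b, hb⟩, rfl⟩

end Transfer

end CDproof

theorem rank_ge_omega1_of_linfty_subspace {X : Type*} [NormedAddCommGroup X]
    [NormedSpace ℝ X]
    (h : ∃ f : lp (fun _ : ℕ => ℝ) ⊤ →L[ℝ] X, Topology.IsClosedEmbedding (⇑f)) :
    ∀ α : Ordinal, α < (Cardinal.aleph 1).ord →
      ∃ A : Set X, IsClosed A ∧ (∀ P ⊆ A, Perfect P → P = ∅) ∧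
        CDiter X A α ≠ ∅ ∧ CDiter X A (α + 1) = ∅ := by
  obtain ⟨f, hf⟩ := h
  intro α hα
  have hαc : (Set.Iio α).Countable := by
    rw [Cardinal.lt_ord, ← Cardinal.succ_aleph0, Order.lt_succ_iff] at hα
    rw [← Set.countable_coe_iff, ← Cardinal.mk_le_aleph0_iff, Ordinal.mk_Iio_ordinal]
    simpa using Cardinal.lift_le.mpr hα
  refine ⟨⇑f '' CDproof.NS α 0,
    hf.isClosedMap _ (CDproof.NS_closed α hαc 0), ?_, ?_, ?_⟩
  · intro P hPA hP
    have hQsub : ⇑f ⁻¹' P ⊆ CDproof.NS α 0 := by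
      intro x hx
      obtain ⟨w, hw, hwe⟩ := hPA hx
      rwa [← hf.injective hwe]
    have hQperf : Perfect (⇑f ⁻¹' P) := by
      constructor
      · exact hP.closed.preimage f.continuous
      · intro x hx
        rw [accPt_iff_nhds]
        intro V hV
        rw [hf.isEmbedding.isInducing.nhds_eq_comap x, Filter.mem_comap] at hV
        obtain ⟨U, hU, hUV⟩ := hV
        obtain ⟨y, ⟨hyU, hyP⟩, hyne⟩ := accPt_iff_nhds.mp (hP.acc _ hx) U hU
        obtain ⟨w, hwA, rfl⟩ := hPA hyP
        exact ⟨w, ⟨hUV (Set.mem_preimage.mpr hyU), hyP⟩,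
          fun hwx => hyne (congrArg f hwx)⟩
    have hQ := CDproof.NS_totallyImperfect α hαc _ hQsub hQperf
    rw [Set.eq_empty_iff_forall_notMem]
    intro y hy
    obtain ⟨w, hwA, rfl⟩ := hPA hy
    have hw2 : w ∈ ⇑f ⁻¹' P := hy
    rw [hQ] at hw2
    exact hw2
  · rw [CDproof.CDiter_image hf (CDproof.NS α 0) α, CDproof.CDiter_NS α hαc α]
    apply Set.nonempty_iff_ne_empty.mp
    exact ⟨f (CDproof.nodePt α []), CDproof.nodePt α [], CDproof.NS_top α, rfl⟩
  · rw [CDproof.CDiter_image hf (CDproof.NS α 0) (α + 1),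
      CDproof.CDiter_NS α hαc (α + 1), CDproof.NS_above α, Set.image_empty]
end
end
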